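/- arXiv:2104.06742 — 7 statements merged into one kernel-verified Lean document; each statement's English description precedes it below -/
import Mathlib

section
/- Let Λ = diag(λ_1,...,λ_S) with λ_s > 0, ρ_UL > 0, and D = diag(ρ_{1,DL},...,ρ_{S,DL}) with ρ_{s,DL} ≥ 0. Then log det(Λ + ρ_UL^{-1} I) - log det(ρ_UL^{-1} I + (Λ^{-1} + D)^{-1}) = Σ_{s=1}^S log(1 + λ_s^2 ρ_UL ρ_{s,DL} / (λ_s(ρ_UL + ρ_{s,DL}) + 1)). -/
open Matrix

lemma scalar_step (l dd ρ : ℝ) (hl : 0 < l) (hdd : 0 ≤ dd) (hρ : 0 < ρ) :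
    Real.log (l + ρ⁻¹) - Real.log (ρ⁻¹ + (l⁻¹ + dd)⁻¹)
      = Real.log (1 + l ^ 2 * ρ * dd / (l * (ρ + dd) + 1)) := by
  have h1 : 0 < l + ρ⁻¹ := by positivity
  have h2 : 0 < l⁻¹ + dd := by positivity
  have h3 : 0 < ρ⁻¹ + (l⁻¹ + dd)⁻¹ := by positivity
  rw [← Real.log_div h1.ne' h3.ne']
  congr 1
  have h4 : l * (ρ + dd) + 1 > 0 := by positivity
  field_simp
  ring

/-- Closed-form single-user secret-key capacity (eq. (7)): for real diagonal
`Λ = diag(λ) ≻ 0`, `ρUL > 0` and `D = diag(d) ⪰ 0`,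
`log det(Λ + ρUL⁻¹ I) - log det(ρUL⁻¹ I + (Λ⁻¹ + D)⁻¹)
  = Σ_s log(1 + λ_s² ρUL d_s / (λ_s (ρUL + d_s) + 1))`. -/
theorem single_user_capacity_closed_form
    (S : ℕ) (lam d : Fin S → ℝ) (hlam : ∀ s, 0 < lam s) (hd : ∀ s, 0 ≤ d s)
    (ρUL : ℝ) (hρ : 0 < ρUL) :
    Real.log ((Matrix.diagonal lam + ρUL⁻¹ • (1 : Matrix (Fin S) (Fin S) ℝ)).det)
      - Real.log ((ρUL⁻¹ • (1 : Matrix (Fin S) (Fin S) ℝ)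
          + ((Matrix.diagonal lam)⁻¹ + Matrix.diagonal d)⁻¹).det)
      = ∑ s, Real.log (1 + (lam s) ^ 2 * ρUL * d s / (lam s * (ρUL + d s) + 1)) := by
  have hone : (ρUL⁻¹ • (1 : Matrix (Fin S) (Fin S) ℝ))
      = Matrix.diagonal (fun _ => ρUL⁻¹) := by
    ext i j
    by_cases h : i = j <;> simp [h, Matrix.one_apply, Matrix.diagonal]
  have hinvlam : (Matrix.diagonal lam)⁻¹ = Matrix.diagonal (fun s => (lam s)⁻¹) := by
    apply Matrix.inv_eq_right_inv
    rw [Matrix.diagonal_mul_diagonal, ← Matrix.diagonal_one]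
    have h : (fun i => lam i * (lam i)⁻¹) = fun _ : Fin S => (1:ℝ) :=
      funext fun s => mul_inv_cancel₀ (hlam s).ne'
    rw [h]
  have hinner : ((Matrix.diagonal lam)⁻¹ + Matrix.diagonal d)⁻¹
      = Matrix.diagonal (fun s => ((lam s)⁻¹ + d s)⁻¹) := by
    rw [hinvlam, Matrix.diagonal_add]
    apply Matrix.inv_eq_right_inv
    rw [Matrix.diagonal_mul_diagonal, ← Matrix.diagonal_one]
    have h : (fun i => ((lam i)⁻¹ + d i) * ((lam i)⁻¹ + d i)⁻¹) = fun _ : Fin S => (1:ℝ) :=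
      funext fun s => mul_inv_cancel₀ (by have h1 := hlam s; have h2 := hd s; positivity)
    rw [h]
  rw [hone, hinner, Matrix.diagonal_add, Matrix.diagonal_add,
    Matrix.det_diagonal, Matrix.det_diagonal]
  have hA : ∀ s : Fin S, lam s + ρUL⁻¹ ≠ 0 := fun s => by
    have := hlam s; positivity
  have hB : ∀ s : Fin S, ρUL⁻¹ + ((lam s)⁻¹ + d s)⁻¹ ≠ 0 := fun s => by
    have h1 := hlam s; have h2 := hd s; positivity
  rw [Real.log_prod (fun s _ => hA s), Real.log_prod (fun s _ => hB s),
    ← Finset.sum_sub_distrib]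
  exact Finset.sum_congr rfl fun s _ => scalar_step _ _ _ (hlam s) (hd s) hρ
end

section
/- The scalar function f(p) = log(1 + λ² ρ p / (λ(ρ + p) + 1)) is concave and strictly increasing in p on [0, ∞) for any fixed λ > 0 and ρ > 0. -/
open Set

/-- The per-mode secret-key capacity `f(p) = log(1 + λ²ρp / (λ(ρ+p)+1))` is concave
and strictly increasing on `[0, ∞)` for fixed `λ, ρ > 0`. -/
theorem per_mode_capacity_concave_strictMono
    (lam ρ : ℝ) (hlam : 0 < lam) (hρ : 0 < ρ) :
    ConcaveOn ℝ (Set.Ici 0)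
        (fun p : ℝ => Real.log (1 + lam ^ 2 * ρ * p / (lam * (ρ + p) + 1)))
      ∧ StrictMonoOn
        (fun p : ℝ => Real.log (1 + lam ^ 2 * ρ * p / (lam * (ρ + p) + 1)))
        (Set.Ici 0) := by
  set c : ℝ := lam * ρ + 1 with hc
  have hcpos : 0 < c := by positivity
  set f : ℝ → ℝ := fun p => 1 + lam ^ 2 * ρ * p / (lam * (ρ + p) + 1) with hf
  have hden : ∀ p : ℝ, p ∈ Set.Ici (0:ℝ) → 0 < lam * (ρ + p) + 1 := by
    intro p hp
    have : (0:ℝ) ≤ p := hp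
    nlinarith
  have hfpos : ∀ p ∈ Set.Ici (0:ℝ), 0 < f p := by
    intro p hp
    have h1 := hden p hp
    have : (0:ℝ) ≤ p := hp
    have : 0 ≤ lam ^ 2 * ρ * p / (lam * (ρ + p) + 1) := by positivity
    simp only [hf]
    linarith
  -- rewrite f on Ici 0
  have hfeq : ∀ p ∈ Set.Ici (0:ℝ), f p = (1 + lam * ρ) + (lam * ρ * c) • (-(lam * p + c)⁻¹) := by
    intro p hp
    have h1 := hden p hp
    have h2 : lam * (ρ + p) + 1 = lam * p + c := by ring
    have h3 : lam * p + c ≠ 0 := by rw [← h2]; exact h1.ne'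
    simp only [hf, smul_eq_mul]
    rw [h2]
    field_simp
    ring
  -- concavity of f on Ici 0
  have hIci : Set.Ici (0:ℝ) ⊆ (fun p : ℝ => lam * p + c) ⁻¹' Set.Ioi 0 := by
    intro p hp
    have : (0:ℝ) ≤ p := hp
    have : 0 < lam * p + c := by nlinarith
    simpa using this
  have hzpow : ConvexOn ℝ (Set.Ioi 0) (fun x : ℝ => x ^ (-1:ℤ)) :=
    (strictConvexOn_zpow (by decide) (by decide)).convexOn
  have haff : ConvexOn ℝ (Set.Ici 0) (fun p : ℝ => (lam * p + c)⁻¹) := by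
    let A : ℝ →ᵃ[ℝ] ℝ := AffineMap.lineMap c (lam + c)
    have hA : ∀ p : ℝ, A p = lam * p + c := by
      intro p
      simp [A, AffineMap.lineMap_apply]
      ring
    have h := (hzpow.comp_affineMap A).subset (by
      intro p hp
      have := hIci hp
      simpa [hA] using this) (convex_Ici 0)
    have : ((fun x : ℝ => x ^ (-1:ℤ)) ∘ A) = fun p : ℝ => (lam * p + c)⁻¹ := by
      funext p; simp [Function.comp, hA p, zpow_neg_one]
    rwa [this] at h
  have hfconc : ConcaveOn ℝ (Set.Ici 0) f := by
    have h1 : ConcaveOn ℝ (Set.Ici 0)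
        (fun p : ℝ => (1 + lam * ρ) + (lam * ρ * c) • (-(lam * p + c)⁻¹)) := by
      have h2 : ConcaveOn ℝ (Set.Ici 0) (fun p : ℝ => -(lam * p + c)⁻¹) := haff.neg
      have h3 := h2.smul (c := lam * ρ * c) (by positivity)
      exact (concaveOn_const _ (convex_Ici 0)).add h3
    refine ⟨convex_Ici 0, fun x hx y hy a b ha hb hab => ?_⟩
    have hxy : a • x + b • y ∈ Set.Ici (0:ℝ) := (convex_Ici 0) hx hy ha hb hab
    rw [hfeq _ hxy, hfeq _ hx, hfeq _ hy]
    exact h1.2 hx hy ha hb hab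
  -- strict monotonicity of f on Ici 0
  have hfmono : StrictMonoOn f (Set.Ici 0) := by
    intro x hx y hy hxy
    have hx0 : (0:ℝ) ≤ x := hx
    have hdx := hden x hx
    have hdy := hden y hy
    simp only [hf]
    have : lam ^ 2 * ρ * x / (lam * (ρ + x) + 1) < lam ^ 2 * ρ * y / (lam * (ρ + y) + 1) := by
      rw [div_lt_div_iff₀ hdx hdy]
      nlinarith [mul_pos (mul_pos (mul_pos (pow_pos hlam 2) hρ)
        (by positivity : (0:ℝ) < lam * ρ + 1)) (sub_pos.mpr hxy)]
    linarith
  constructor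
  · refine ⟨convex_Ici 0, fun x hx y hy a b ha hb hab => ?_⟩
    have hxy : a • x + b • y ∈ Set.Ici (0:ℝ) := (convex_Ici 0) hx hy ha hb hab
    have h1 : a • Real.log (f x) + b • Real.log (f y) ≤ Real.log (a • f x + b • f y) :=
      strictConcaveOn_log_Ioi.concaveOn.2 (hfpos x hx) (hfpos y hy) ha hb hab
    have h2 : a • f x + b • f y ≤ f (a • x + b • y) := hfconc.2 hx hy ha hb hab
    have h3 : 0 < a • f x + b • f y := by
      simp only [smul_eq_mul]
      rcases eq_or_lt_of_le ha with ha' | ha'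
      · have hb1 : b = 1 := by linarith
        rw [← ha', hb1]
        simpa using hfpos y hy
      · nlinarith [mul_pos ha' (hfpos x hx), mul_nonneg hb (hfpos y hy).le]
    calc a • Real.log (f x) + b • Real.log (f y) ≤ Real.log (a • f x + b • f y) := h1
      _ ≤ Real.log (f (a • x + b • y)) := Real.log_le_log h3 h2
  · intro x hx y hy hxy
    exact Real.log_lt_log (hfpos x hx) (hfmono hx hy hxy)
end

section
/- The function C(C_DL) = log det(Λ + ρ^{-1} I) - log det(ρ^{-1} I + (Λ^{-1} + σ^{-2} Q^† C_DL Q)^{-1}) is concave on the cone of M×M positive semidefinite Hermitian matrices C_DL. -/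
set_option linter.unusedSectionVars false
set_option linter.unusedTactic false
set_option maxHeartbeats 1000000

open Matrix ComplexOrder

section Helpers

variable {n : Type*} [Fintype n] [DecidableEq n]

lemma rsmul_eq (a : ℝ) (M : Matrix n n ℂ) : a • M = (a : ℂ) • M := by
  ext i j; simp [Matrix.smul_apply, Complex.real_smul]

lemma psd_smul {A : Matrix n n ℂ} (hA : A.PosSemidef) {c : ℝ} (hc : 0 ≤ c) :
    ((c : ℂ) • A).PosSemidef := by
  refine PosSemidef.of_dotProduct_mulVec_nonneg ?_ (fun x => ?_)
  · simp only [Matrix.IsHermitian, conjTranspose_smul, Complex.star_def, Complex.conj_ofReal]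
    rw [hA.1]
  · rw [smul_mulVec, dotProduct_smul, smul_eq_mul]
    exact mul_nonneg (Complex.zero_le_real.mpr hc) (hA.dotProduct_mulVec_nonneg x)

lemma pd_smul {A : Matrix n n ℂ} (hA : A.PosDef) {c : ℝ} (hc : 0 < c) :
    ((c : ℂ) • A).PosDef := by
  refine posDef_iff_dotProduct_mulVec.mpr ⟨?_, fun x hx => ?_⟩
  · simp only [Matrix.IsHermitian, conjTranspose_smul, Complex.star_def, Complex.conj_ofReal]
    rw [hA.1]
  · rw [smul_mulVec, dotProduct_smul, smul_eq_mul]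
    exact mul_pos (Complex.zero_lt_real.mpr hc) (hA.dotProduct_mulVec_pos hx)

lemma pd_det_re_pos {A : Matrix n n ℂ} (hA : A.PosDef) : 0 < A.det.re :=
  (Complex.pos_iff.mp hA.det_pos).1

lemma pd_det_eq_re {A : Matrix n n ℂ} (hA : A.PosDef) : A.det = (A.det.re : ℂ) := by
  have h := (Complex.pos_iff.mp hA.det_pos).2
  exact Complex.ext rfl h.symm

lemma pd_conj {A B : Matrix n n ℂ} (hA : A.PosDef) (hB : IsUnit B.det) :
    (Bᴴ * A * B).PosDef := by
  refine posDef_iff_dotProduct_mulVec.mpr ⟨?_, fun x hx => ?_⟩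
  · show (Bᴴ * A * B)ᴴ = _
    rw [conjTranspose_mul, conjTranspose_mul, conjTranspose_conjTranspose, hA.1,
      Matrix.mul_assoc]
  · have hBx : B *ᵥ x ≠ 0 := fun h => hx (by
      have h2 := congrArg (fun v => B⁻¹ *ᵥ v) h
      simpa [mulVec_mulVec, Matrix.nonsing_inv_mul _ hB] using h2)
    calc (0:ℂ) < star (B *ᵥ x) ⬝ᵥ A *ᵥ (B *ᵥ x) := hA.dotProduct_mulVec_pos hBx
      _ = star x ⬝ᵥ (Bᴴ * A * B) *ᵥ x := by
          rw [star_mulVec, ← dotProduct_mulVec, mulVec_mulVec, mulVec_mulVec,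
            Matrix.mul_assoc]

lemma exists_unitary_rep {A : Matrix n n ℂ} (hA : A.IsHermitian) :
    ∃ U : Matrix n n ℂ, U * star U = 1 ∧ star U * U = 1 ∧
      A = U * diagonal (fun i => (hA.eigenvalues i : ℂ)) * star U := by
  refine ⟨hA.eigenvectorUnitary, ?_, ?_, ?_⟩
  · exact (Matrix.mem_unitaryGroup_iff).mp hA.eigenvectorUnitary.2
  · exact (Matrix.mem_unitaryGroup_iff').mp hA.eigenvectorUnitary.2
  · exact hA.spectral_theorem

lemma det_conj {U : Matrix n n ℂ} (hU : U * star U = 1) (M : Matrix n n ℂ) :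
    (U * M * star U).det = M.det := by
  have h := congrArg Matrix.det hU
  rw [Matrix.det_mul, Matrix.det_one] at h
  rw [Matrix.det_mul, Matrix.det_mul]
  linear_combination M.det * h

lemma inv_sandwich {U R : Matrix n n ℂ} (hU1 : U * star U = 1) (hU2 : star U * U = 1)
    (hR : IsUnit R.det) (v : n → ℂ) (hv : ∀ i, v i ≠ 0) :
    (R * (U * diagonal v * star U) * R)⁻¹
      = R⁻¹ * (U * diagonal (fun i => (v i)⁻¹) * star U) * R⁻¹ := by
  have hcanU : ∀ X : Matrix n n ℂ, star U * (U * X) = X := fun X => by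
    rw [← Matrix.mul_assoc, hU2, Matrix.one_mul]
  have hdd : diagonal v * diagonal (fun i => (v i)⁻¹) = 1 := by
    rw [diagonal_mul_diagonal,
      show (fun i => v i * (v i)⁻¹) = fun _ => (1:ℂ) from funext fun i => mul_inv_cancel₀ (hv i),
      diagonal_one]
  apply Matrix.inv_eq_right_inv
  simp only [Matrix.mul_assoc]
  rw [Matrix.mul_nonsing_inv_cancel_left _ _ hR, hcanU]
  rw [← Matrix.mul_assoc (diagonal v), hdd, Matrix.one_mul,
    ← Matrix.mul_assoc U (star U), hU1, Matrix.one_mul, Matrix.mul_nonsing_inv _ hR]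

open scoped MatrixOrder in
lemma pd_sqrt {A : Matrix n n ℂ} (hA : A.PosDef) :
    ∃ R : Matrix n n ℂ, R.IsHermitian ∧ IsUnit R.det ∧ R * R = A := by
  refine ⟨CFC.sqrt A, (nonneg_iff_posSemidef.mp (CFC.sqrt_nonneg A)).isHermitian, ?_,
    CFC.sqrt_mul_sqrt_self A (nonneg_iff_posSemidef.mpr hA.posSemidef)⟩
  have h : (CFC.sqrt A).det * (CFC.sqrt A).det = A.det := by
    rw [← Matrix.det_mul, CFC.sqrt_mul_sqrt_self A (nonneg_iff_posSemidef.mpr hA.posSemidef)]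
  rw [isUnit_iff_ne_zero]
  intro h0
  rw [h0, mul_zero] at h
  exact hA.det_pos.ne' h.symm

/-- simultaneous congruence-diagonalization of a PD matrix and a PSD matrix -/
lemma pd_pair_rep {A B : Matrix n n ℂ} (hA : A.PosDef) (hB : B.PosSemidef) :
    ∃ (R U : Matrix n n ℂ) (μ : n → ℝ),
      R.IsHermitian ∧ IsUnit R.det ∧
      U * star U = 1 ∧ star U * U = 1 ∧ (∀ i, 0 ≤ μ i) ∧
      (B.PosDef → ∀ i, 0 < μ i) ∧
      A = R * (U * diagonal (fun _ => (1:ℂ)) * star U) * R ∧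
      B = R * (U * diagonal (fun i => ((μ i : ℝ) : ℂ)) * star U) * R := by
  obtain ⟨R, hRH, hRdet, hRR⟩ := pd_sqrt hA
  have hRinvH : (R⁻¹)ᴴ = R⁻¹ := by rw [Matrix.conjTranspose_nonsing_inv, hRH.eq]
  have hRinvdet : IsUnit (R⁻¹).det := Matrix.isUnit_nonsing_inv_det _ hRdet
  set C := R⁻¹ * B * R⁻¹ with hCdef
  have hCform : C = (R⁻¹)ᴴ * B * R⁻¹ := by rw [hRinvH]
  have hCpsd : C.PosSemidef := hCform ▸ hB.conjTranspose_mul_mul_same R⁻¹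
  obtain ⟨U, hU1, hU2, hCrep⟩ := exists_unitary_rep hCpsd.isHermitian
  refine ⟨R, U, hCpsd.isHermitian.eigenvalues, hRH, hRdet, hU1, hU2,
    fun i => hCpsd.eigenvalues_nonneg i, ?_, ?_, ?_⟩
  · intro hBpd i
    have hCpd : C.PosDef := hCform ▸ pd_conj hBpd hRinvdet
    exact hCpd.eigenvalues_pos i
  · rw [show diagonal (fun _ => (1:ℂ)) = (1 : Matrix n n ℂ) from Matrix.diagonal_one,
      Matrix.mul_one, hU1, Matrix.mul_one, hRR]
  · rw [← hCrep, hCdef]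
    simp only [Matrix.mul_assoc]
    rw [Matrix.mul_nonsing_inv_cancel_left _ _ hRdet, Matrix.nonsing_inv_mul _ hRdet,
      Matrix.mul_one]

lemma combo_smul (R U : Matrix n n ℂ) (c : ℂ) (D : Matrix n n ℂ) :
    c • (R * (U * D * star U) * R) = R * (U * (c • D) * star U) * R := by
  simp only [Matrix.mul_assoc, mul_smul_comm, smul_mul_assoc]

lemma det_RMR {R A : Matrix n n ℂ} (hRR : R * R = A) (M : Matrix n n ℂ) :
    (R * M * R).det = A.det * M.det := by
  rw [Matrix.det_mul, Matrix.det_mul, ← hRR, Matrix.det_mul]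
  ring

/-- Ky Fan: log-concavity of determinant on PD matrices (multiplicative form). -/
lemma kyFan {A B : Matrix n n ℂ} (hA : A.PosDef) (hB : B.PosDef)
    {a b : ℝ} (ha : 0 ≤ a) (hb : 0 ≤ b) (hab : a + b = 1) :
    A.det.re ^ a * B.det.re ^ b ≤ ((a:ℂ) • A + (b:ℂ) • B).det.re := by
  obtain ⟨R, U, μ, hRH, hRdet, hU1, hU2, hμ0, hμpos', hArep, hBrep⟩ :=
    pd_pair_rep hA hB.posSemidef
  have hμ : ∀ i, 0 < μ i := hμpos' hB
  have hRR : R * R = A := by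
    rw [hArep, Matrix.diagonal_one, Matrix.mul_one, hU1, Matrix.mul_one]
  have hD : (a:ℂ) • diagonal (fun _ => (1:ℂ)) + (b:ℂ) • diagonal (fun i => ((μ i : ℝ) : ℂ))
      = diagonal (fun i => ((a + b * μ i : ℝ) : ℂ)) := by
    rw [← Matrix.diagonal_smul, ← Matrix.diagonal_smul, Matrix.diagonal_add]
    congr 1
    funext i
    push_cast
    simp only [Pi.add_apply, Pi.smul_apply, smul_eq_mul]
    ring
  have hcombo : (a:ℂ) • A + (b:ℂ) • B
      = R * (U * diagonal (fun i => ((a + b * μ i : ℝ) : ℂ)) * star U) * R := by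
    rw [hArep, hBrep, combo_smul, combo_smul, ← Matrix.add_mul, ← Matrix.mul_add,
      ← Matrix.add_mul, ← Matrix.mul_add, hD]
  have hdA := pd_det_re_pos hA
  have hAre := pd_det_eq_re hA
  have hdetB : B.det = A.det * ((∏ i, μ i : ℝ) : ℂ) := by
    rw [hBrep, det_RMR hRR, det_conj hU1, Matrix.det_diagonal, Complex.ofReal_prod]
  have hdetCombo : ((a:ℂ) • A + (b:ℂ) • B).det
      = A.det * ((∏ i, (a + b * μ i) : ℝ) : ℂ) := by
    rw [hcombo, det_RMR hRR, det_conj hU1, Matrix.det_diagonal, Complex.ofReal_prod]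
  have hBre : B.det.re = A.det.re * ∏ i, μ i := by
    rw [hdetB, hAre, ← Complex.ofReal_mul, Complex.ofReal_re]; simp
  have hComboRe : ((a:ℂ) • A + (b:ℂ) • B).det.re = A.det.re * ∏ i, (a + b * μ i) := by
    rw [hdetCombo, hAre, ← Complex.ofReal_mul, Complex.ofReal_re]; simp
  rw [hBre, hComboRe]
  have hprodμ : (0:ℝ) ≤ ∏ i, μ i := Finset.prod_nonneg fun i _ => (hμ i).le
  calc A.det.re ^ a * (A.det.re * ∏ i, μ i) ^ b
      = A.det.re * (∏ i, μ i) ^ b := by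
        rw [Real.mul_rpow hdA.le hprodμ, ← mul_assoc, ← Real.rpow_add hdA, hab,
          Real.rpow_one]
    _ ≤ A.det.re * ∏ i, (a + b * μ i) := by
        apply mul_le_mul_of_nonneg_left _ hdA.le
        rw [← Real.finset_prod_rpow _ _ (fun i _ => (hμ i).le)]
        apply Finset.prod_le_prod (fun i _ => Real.rpow_nonneg (hμ i).le b)
        intro i _
        have := Real.geom_mean_le_arith_mean2_weighted ha hb zero_le_one (hμ i).le hab
        simpa [Real.one_rpow] using this

/-- determinant monotonicity: adding a PSD matrix to a PD matrix increases the determinant. -/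
lemma det_re_mono {A P : Matrix n n ℂ} (hA : A.PosDef) (hP : P.PosSemidef) :
    A.det.re ≤ (A + P).det.re := by
  obtain ⟨R, U, μ, hRH, hRdet, hU1, hU2, hμ0, _, hArep, hPrep⟩ := pd_pair_rep hA hP
  have hRR : R * R = A := by
    rw [hArep, Matrix.diagonal_one, Matrix.mul_one, hU1, Matrix.mul_one]
  have hD : diagonal (fun _ => (1:ℂ)) + diagonal (fun i => ((μ i : ℝ) : ℂ))
      = diagonal (fun i => ((1 + μ i : ℝ) : ℂ)) := by
    rw [Matrix.diagonal_add]
    congr 1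
    funext i
    push_cast
    ring
  have hsum : A + P = R * (U * diagonal (fun i => ((1 + μ i : ℝ) : ℂ)) * star U) * R := by
    rw [hArep, hPrep, ← Matrix.add_mul, ← Matrix.mul_add, ← Matrix.add_mul,
      ← Matrix.mul_add, hD]
  have hAre := pd_det_eq_re hA
  have hdet : (A + P).det = A.det * ((∏ i, (1 + μ i) : ℝ) : ℂ) := by
    rw [hsum, det_RMR hRR, det_conj hU1, Matrix.det_diagonal, Complex.ofReal_prod]
  have hre : (A + P).det.re = A.det.re * ∏ i, (1 + μ i) := by
    rw [hdet, hAre, ← Complex.ofReal_mul, Complex.ofReal_re]; simp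
  rw [hre]
  have h1 : (1:ℝ) ≤ ∏ i, (1 + μ i) := by
    calc (1:ℝ) = ∏ _i : n, 1 := by simp
      _ ≤ ∏ i, (1 + μ i) :=
        Finset.prod_le_prod (fun i _ => by norm_num) (fun i _ => by linarith [hμ0 i])
  exact le_mul_of_one_le_right (pd_det_re_pos hA).le h1

lemma pos_aux {a b μ : ℝ} (ha : 0 ≤ a) (hb : 0 ≤ b) (hab : a + b = 1) (hμ : 0 < μ) :
    0 < a + b * μ := by
  rcases eq_or_lt_of_le ha with h | h
  · have hb1 : b = 1 := by linarith
    rw [← h, hb1]; simpa using hμ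
  · have : 0 ≤ b * μ := mul_nonneg hb hμ.le
    linarith

lemma scalar_inv_convex {a b μ : ℝ} (ha : 0 ≤ a) (hb : 0 ≤ b) (hab : a + b = 1)
    (hμ : 0 < μ) : 0 ≤ a + b * μ⁻¹ - (a + b * μ)⁻¹ := by
  obtain rfl : b = 1 - a := by linarith
  have h1 : 0 < a + (1 - a) * μ := pos_aux ha hb hab hμ
  have key : a + (1 - a) * μ⁻¹ - (a + (1 - a) * μ)⁻¹
      = a * (1 - a) * (μ - 1) ^ 2 / (μ * (a + (1 - a) * μ)) := by
    field_simp
    ring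
  rw [key]
  apply div_nonneg
  · have := mul_nonneg ha hb
    positivity
  · positivity

/-- convexity of the matrix inverse on PD matrices (two-point Loewner inequality) -/
lemma inv_convex {A B : Matrix n n ℂ} (hA : A.PosDef) (hB : B.PosDef)
    {a b : ℝ} (ha : 0 ≤ a) (hb : 0 ≤ b) (hab : a + b = 1) :
    ((a:ℂ) • A⁻¹ + (b:ℂ) • B⁻¹ - ((a:ℂ) • A + (b:ℂ) • B)⁻¹).PosSemidef := by
  obtain ⟨R, U, μ, hRH, hRdet, hU1, hU2, hμ0, hμpos', hArep, hBrep⟩ :=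
    pd_pair_rep hA hB.posSemidef
  have hμ : ∀ i, 0 < μ i := hμpos' hB
  have hRinvH : (R⁻¹)ᴴ = R⁻¹ := by rw [Matrix.conjTranspose_nonsing_inv, hRH.eq]
  -- inverses
  have hAinv : A⁻¹ = R⁻¹ * (U * diagonal (fun _ => (1:ℂ)) * star U) * R⁻¹ := by
    rw [hArep, inv_sandwich hU1 hU2 hRdet _ (fun i => one_ne_zero)]
    simp
  have hBinv : B⁻¹ = R⁻¹ * (U * diagonal (fun i => (((μ i)⁻¹ : ℝ) : ℂ)) * star U) * R⁻¹ := by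
    rw [hBrep, inv_sandwich hU1 hU2 hRdet _ (fun i => by
      exact_mod_cast Complex.ofReal_ne_zero.mpr (hμ i).ne')]
    congr 2
    congr 1
    funext i
    push_cast
    rfl
  have hD : (a:ℂ) • diagonal (fun _ => (1:ℂ)) + (b:ℂ) • diagonal (fun i => ((μ i : ℝ) : ℂ))
      = diagonal (fun i => ((a + b * μ i : ℝ) : ℂ)) := by
    rw [← Matrix.diagonal_smul, ← Matrix.diagonal_smul, Matrix.diagonal_add]
    congr 1
    funext i
    push_cast
    simp only [Pi.add_apply, Pi.smul_apply, smul_eq_mul]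
    ring
  have hcombo : (a:ℂ) • A + (b:ℂ) • B
      = R * (U * diagonal (fun i => ((a + b * μ i : ℝ) : ℂ)) * star U) * R := by
    rw [hArep, hBrep, combo_smul, combo_smul, ← Matrix.add_mul, ← Matrix.mul_add,
      ← Matrix.add_mul, ← Matrix.mul_add, hD]
  have hcomboInv : ((a:ℂ) • A + (b:ℂ) • B)⁻¹
      = R⁻¹ * (U * diagonal (fun i => (((a + b * μ i)⁻¹ : ℝ) : ℂ)) * star U) * R⁻¹ := by
    rw [hcombo, inv_sandwich hU1 hU2 hRdet _ (fun i =>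
      Complex.ofReal_ne_zero.mpr (pos_aux ha hb hab (hμ i)).ne')]
    congr 2
    congr 1
    funext i
    push_cast
    rfl
  have hD2 : (a:ℂ) • diagonal (fun _ => (1:ℂ))
        + (b:ℂ) • diagonal (fun i => (((μ i)⁻¹ : ℝ) : ℂ))
        - diagonal (fun i => (((a + b * μ i)⁻¹ : ℝ) : ℂ))
      = diagonal (fun i => ((a + b * (μ i)⁻¹ - (a + b * μ i)⁻¹ : ℝ) : ℂ)) := by
    rw [← Matrix.diagonal_smul, ← Matrix.diagonal_smul, Matrix.diagonal_add,
      Matrix.diagonal_sub]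
    apply congrArg diagonal
    funext i
    push_cast
    simp only [Pi.add_apply, Pi.sub_apply, Pi.smul_apply, smul_eq_mul]
    ring
  have hdiff : (a:ℂ) • A⁻¹ + (b:ℂ) • B⁻¹ - ((a:ℂ) • A + (b:ℂ) • B)⁻¹
      = R⁻¹ * (U * diagonal
          (fun i => ((a + b * (μ i)⁻¹ - (a + b * μ i)⁻¹ : ℝ) : ℂ)) * star U) * R⁻¹ := by
    rw [hAinv, hBinv, hcomboInv, combo_smul, combo_smul, ← Matrix.add_mul, ← Matrix.mul_add,
      ← Matrix.add_mul, ← Matrix.mul_add, ← Matrix.sub_mul, ← Matrix.mul_sub,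
      ← Matrix.sub_mul, ← Matrix.mul_sub, hD2]
  rw [hdiff]
  have hgpsd : (diagonal
      (fun i => ((a + b * (μ i)⁻¹ - (a + b * μ i)⁻¹ : ℝ) : ℂ))).PosSemidef := by
    apply Matrix.PosSemidef.diagonal
    intro i
    exact Complex.zero_le_real.mpr (scalar_inv_convex ha hb hab (hμ i))
  have hpsd := hgpsd.conjTranspose_mul_mul_same (star U * R⁻¹)
  have hW : (star U * R⁻¹)ᴴ = R⁻¹ * U := by
    rw [Matrix.conjTranspose_mul, hRinvH, Matrix.star_eq_conjTranspose,
      Matrix.conjTranspose_conjTranspose]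
  rw [hW] at hpsd
  simpa only [Matrix.mul_assoc] using hpsd

lemma inv_sandwich1 {U : Matrix n n ℂ} (hU1 : U * star U = 1) (hU2 : star U * U = 1)
    (v : n → ℂ) (hv : ∀ i, v i ≠ 0) :
    (U * diagonal v * star U)⁻¹ = U * diagonal (fun i => (v i)⁻¹) * star U := by
  have h := inv_sandwich (R := 1) hU1 hU2 (by simp) v hv
  simpa only [Matrix.one_mul, Matrix.mul_one, inv_one] using h

lemma const_sandwich {U : Matrix n n ℂ} (hU1 : U * star U = 1) (c : ℂ) :
    U * diagonal (fun _ => c) * star U = c • 1 := by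
  rw [← Matrix.smul_one_eq_diagonal, mul_smul_comm, Matrix.mul_one, smul_mul_assoc, hU1]

/-- `T X = ρ•1 - ρ²•(X+ρ•1)⁻¹` is positive definite for `X` positive definite. -/
lemma T_posdef {X : Matrix n n ℂ} (hX : X.PosDef) {ρ : ℝ} (hρ : 0 < ρ) :
    ((ρ:ℂ) • 1 - ((ρ:ℂ))^2 • (X + (ρ:ℂ) • 1)⁻¹).PosDef := by
  obtain ⟨U, hU1, hU2, hXrep⟩ := exists_unitary_rep hX.isHermitian
  set lam := hX.isHermitian.eigenvalues with hlam
  have hl : ∀ i, 0 < lam i := fun i => hX.eigenvalues_pos i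
  have hZrep : X + (ρ:ℂ) • 1 = U * diagonal (fun i => ((lam i + ρ : ℝ) : ℂ)) * star U := by
    rw [hXrep, ← const_sandwich hU1 (ρ:ℂ), ← Matrix.add_mul, ← Matrix.mul_add,
      Matrix.diagonal_add]
    congr 2
    apply congrArg diagonal
    funext i
    push_cast
    ring
  have hZinv : (X + (ρ:ℂ) • 1)⁻¹
      = U * diagonal (fun i => (((lam i + ρ)⁻¹ : ℝ) : ℂ)) * star U := by
    rw [hZrep, inv_sandwich1 hU1 hU2 _ (fun i =>
      Complex.ofReal_ne_zero.mpr (by have := hl i; positivity))]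
    congr 2
    apply congrArg diagonal
    funext i
    push_cast
    ring
  have hTrep : (ρ:ℂ) • 1 - ((ρ:ℂ))^2 • (X + (ρ:ℂ) • 1)⁻¹
      = U * diagonal (fun i => ((ρ - ρ^2 * (lam i + ρ)⁻¹ : ℝ) : ℂ)) * star U := by
    rw [hZinv, ← const_sandwich hU1 (ρ:ℂ), ← smul_mul_assoc, ← mul_smul_comm,
      ← Matrix.sub_mul, ← Matrix.mul_sub, ← Matrix.diagonal_smul, Matrix.diagonal_sub]
    apply congrArg (fun D : Matrix n n ℂ => U * D * star U)
    apply congrArg diagonal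
    funext i
    push_cast
    simp only [Pi.sub_apply, Pi.smul_apply, smul_eq_mul]
  rw [hTrep]
  have hdiagpd : (diagonal (fun i => ((ρ - ρ^2 * (lam i + ρ)⁻¹ : ℝ) : ℂ))).PosDef := by
    rw [Matrix.posDef_diagonal_iff]
    intro i
    apply Complex.zero_lt_real.mpr
    have hpos : ρ - ρ^2 * (lam i + ρ)⁻¹ = ρ * lam i / (lam i + ρ) := by
      have h0 : lam i + ρ ≠ 0 := by have := hl i; positivity
      field_simp
      ring
    rw [hpos]
    have := hl i
    positivity
  have hUdet : IsUnit (star U).det := by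
    have h := congrArg Matrix.det hU2
    rw [Matrix.det_mul, Matrix.det_one] at h
    exact IsUnit.of_mul_eq_one _ h
  have := pd_conj hdiagpd hUdet
  rwa [Matrix.star_eq_conjTranspose, Matrix.conjTranspose_conjTranspose,
    ← Matrix.star_eq_conjTranspose] at this


/-- determinant identity: `det(ρ⁻¹•1 + X⁻¹) * det(T X) = 1`. -/
lemma det_obj_T {X : Matrix n n ℂ} (hX : X.PosDef) {ρ : ℝ} (hρ : 0 < ρ) :
    (((ρ:ℂ))⁻¹ • (1 : Matrix n n ℂ) + X⁻¹).det
      * ((ρ:ℂ) • 1 - ((ρ:ℂ))^2 • (X + (ρ:ℂ) • 1)⁻¹).det = 1 := by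
  have hρc : (ρ:ℂ) ≠ 0 := Complex.ofReal_ne_zero.mpr hρ.ne'
  have hZpd : (X + (ρ:ℂ) • 1).PosDef :=
    hX.add (pd_smul Matrix.PosDef.one hρ)
  have hXu : IsUnit X.det := hX.det_pos.ne'.isUnit
  have hZu : IsUnit (X + (ρ:ℂ) • 1).det := hZpd.det_pos.ne'.isUnit
  set Z := X + (ρ:ℂ) • 1 with hZ
  have hE1 : ((ρ:ℂ))⁻¹ • (1 : Matrix n n ℂ) + X⁻¹ = ((ρ:ℂ))⁻¹ • (X⁻¹ * Z) := by
    rw [hZ, Matrix.mul_add, Matrix.nonsing_inv_mul X hXu, mul_smul_comm, Matrix.mul_one,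
      smul_add, smul_smul, inv_mul_cancel₀ hρc, one_smul, add_comm ((ρ:ℂ)⁻¹ • 1)]
  have hZX : Z⁻¹ * X = 1 - (ρ:ℂ) • Z⁻¹ := by
    have hXZ : X = Z - (ρ:ℂ) • 1 := by rw [hZ]; abel
    nth_rewrite 1 [hXZ]
    rw [Matrix.mul_sub, Matrix.nonsing_inv_mul _ hZu, mul_smul_comm, Matrix.mul_one]
  have hE2 : (ρ:ℂ) • 1 - ((ρ:ℂ))^2 • Z⁻¹ = (ρ:ℂ) • (Z⁻¹ * X) := by
    rw [hZX, smul_sub, smul_smul, sq]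
  rw [hE1, hE2, Matrix.det_smul, Matrix.det_smul, Matrix.det_mul, Matrix.det_mul,
    Matrix.det_nonsing_inv, Matrix.det_nonsing_inv]
  simp only [Ring.inverse_eq_inv']
  have hXd : X.det ≠ 0 := hX.det_pos.ne'
  have hZd : Z.det ≠ 0 := hZpd.det_pos.ne'
  field_simp
  rw [← mul_pow, one_div, inv_mul_cancel₀ hρc, one_pow]


/-- value identity: `log det(ρ⁻¹•1 + X⁻¹).re = - log det(T X).re` for PD `X`. -/
lemma log_obj_eq {X : Matrix n n ℂ} (hX : X.PosDef) {ρ : ℝ} (hρ : 0 < ρ) :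
    Real.log ((((ρ:ℂ))⁻¹ • (1 : Matrix n n ℂ) + X⁻¹).det.re)
      = - Real.log (((ρ:ℂ) • 1 - ((ρ:ℂ))^2 • (X + (ρ:ℂ) • 1)⁻¹).det.re) := by
  have hobjpd : (((ρ:ℂ))⁻¹ • (1 : Matrix n n ℂ) + X⁻¹).PosDef := by
    have h1 : (((ρ:ℂ))⁻¹ • (1 : Matrix n n ℂ)).PosDef := by
      have := pd_smul (Matrix.PosDef.one (n := n) (R := ℂ)) (inv_pos.mpr hρ)
      rwa [Complex.ofReal_inv] at this
    exact h1.add_posSemidef hX.inv.posSemidef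
  have hTpd := T_posdef hX hρ
  have hprod := det_obj_T hX hρ
  have he := pd_det_eq_re hobjpd
  have ht := pd_det_eq_re hTpd
  rw [he, ht, ← Complex.ofReal_mul, ← Complex.ofReal_one] at hprod
  have hprodr := Complex.ofReal_injective hprod
  have htpos := pd_det_re_pos hTpd
  have : (((ρ:ℂ))⁻¹ • (1 : Matrix n n ℂ) + X⁻¹).det.re
      = (((ρ:ℂ) • 1 - ((ρ:ℂ))^2 • (X + (ρ:ℂ) • 1)⁻¹).det.re)⁻¹ :=
    eq_inv_of_mul_eq_one_left (by linarith [mul_comm (((ρ:ℂ))⁻¹ • (1 : Matrix n n ℂ) + X⁻¹).det.re (((ρ:ℂ) • 1 - ((ρ:ℂ))^2 • (X + (ρ:ℂ) • 1)⁻¹).det.re)] )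
  rw [this, Real.log_inv]

end Helpers


/-- Proposition 2: the secret-key capacity
`C(C_DL) = log det(Λ + ρ⁻¹I) - log det(ρ⁻¹I + (Λ⁻¹ + σ⁻² Qᴴ C_DL Q)⁻¹)`
is concave on the cone of `M×M` positive semidefinite Hermitian matrices. -/
theorem capacity_concave_in_training_covariance
    (M S : ℕ) (lam : Fin S → ℝ) (hlam : ∀ s, 0 < lam s)
    (ρ σ : ℝ) (hρ : 0 < ρ) (hσ : 0 < σ)
    (Q : Matrix (Fin M) (Fin S) ℂ) (hQ : Qᴴ * Q = 1) :
    ConcaveOn ℝ {C : Matrix (Fin M) (Fin M) ℂ | C.PosSemidef}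
      (fun C =>
        Real.log ((Matrix.diagonal (fun s => (lam s : ℂ))
            + (ρ⁻¹ : ℂ) • (1 : Matrix (Fin S) (Fin S) ℂ)).det.re)
        - Real.log (((ρ⁻¹ : ℂ) • (1 : Matrix (Fin S) (Fin S) ℂ)
            + ((Matrix.diagonal (fun s => (lam s : ℂ)))⁻¹
              + ((σ ^ 2)⁻¹ : ℂ) • (Qᴴ * C * Q))⁻¹).det.re)) := by
  have hσ2 : (0:ℝ) ≤ (σ ^ 2)⁻¹ := by positivity
  have hΛpd : (Matrix.diagonal (fun s => (lam s : ℂ))).PosDef :=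
    Matrix.posDef_diagonal_iff.mpr fun s => Complex.zero_lt_real.mpr (hlam s)
  set Xm : Matrix (Fin M) (Fin M) ℂ → Matrix (Fin S) (Fin S) ℂ := fun C =>
    (Matrix.diagonal (fun s => (lam s : ℂ)))⁻¹ + ((σ ^ 2)⁻¹ : ℂ) • (Qᴴ * C * Q) with hXm
  have hXpd : ∀ {C : Matrix (Fin M) (Fin M) ℂ}, C.PosSemidef → (Xm C).PosDef := by
    intro C hC
    rw [hXm]
    refine hΛpd.inv.add_posSemidef ?_
    have := psd_smul (hC.conjTranspose_mul_mul_same Q) hσ2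
    convert this using 2
    push_cast
    exacts [rfl, by simp]
  constructor
  · intro C₁ h₁ C₂ h₂ a b ha hb hab
    show (a • C₁ + b • C₂).PosSemidef
    rw [rsmul_eq, rsmul_eq]
    exact (psd_smul h₁ ha).add (psd_smul h₂ hb)
  · intro C₁ h₁ C₂ h₂ a b ha hb hab
    rcases ha.eq_or_lt with h0 | hapos
    · have hb1 : b = 1 := by linarith
      subst hb1
      rw [← h0]
      simp
    rcases hb.eq_or_lt with h0 | hbpos
    · have ha1 : a = 1 := by linarith
      subst ha1
      rw [← h0]
      simp
    have habC : (a:ℂ) + (b:ℂ) = 1 := by exact_mod_cast hab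
    have hX1 := hXpd h₁
    have hX2 := hXpd h₂
    have hcpsd : (a • C₁ + b • C₂).PosSemidef := by
      rw [rsmul_eq, rsmul_eq]; exact (psd_smul h₁ ha).add (psd_smul h₂ hb)
    have hXc := hXpd hcpsd
    have hXaff : Xm (a • C₁ + b • C₂) = (a:ℂ) • Xm C₁ + (b:ℂ) • Xm C₂ := by
      rw [hXm]
      simp only []
      rw [rsmul_eq, rsmul_eq, Matrix.mul_add, Matrix.add_mul]
      simp only [Matrix.mul_smul, Matrix.smul_mul]
      nth_rewrite 1 [show (Matrix.diagonal (fun s => (lam s : ℂ)))⁻¹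
        = ((a:ℂ)+(b:ℂ)) • (Matrix.diagonal (fun s => (lam s : ℂ)))⁻¹ from by
          rw [habC, one_smul]]
      module
    set X₁ := Xm C₁ with hX₁
    set X₂ := Xm C₂ with hX₂
    have hZ1pd : (X₁ + (ρ:ℂ) • 1).PosDef := hX1.add (pd_smul Matrix.PosDef.one hρ)
    have hZ2pd : (X₂ + (ρ:ℂ) • 1).PosDef := hX2.add (pd_smul Matrix.PosDef.one hρ)
    have hZaff : Xm (a • C₁ + b • C₂) + (ρ:ℂ) • 1
        = (a:ℂ) • (X₁ + (ρ:ℂ) • 1) + (b:ℂ) • (X₂ + (ρ:ℂ) • 1) := by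
      rw [hXaff]
      nth_rewrite 1 [show ((ρ:ℂ) • (1 : Matrix (Fin S) (Fin S) ℂ))
        = ((a:ℂ)+(b:ℂ)) • ((ρ:ℂ) • (1 : Matrix (Fin S) (Fin S) ℂ)) from by
          rw [habC, one_smul]]
      module
    have hPpsd := inv_convex hZ1pd hZ2pd ha hb hab
    have hTaff : (ρ:ℂ) • 1 - ((ρ:ℂ))^2 • (Xm (a • C₁ + b • C₂) + (ρ:ℂ) • 1)⁻¹
        = ((a:ℂ) • ((ρ:ℂ) • 1 - ((ρ:ℂ))^2 • (X₁ + (ρ:ℂ) • 1)⁻¹)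
            + (b:ℂ) • ((ρ:ℂ) • 1 - ((ρ:ℂ))^2 • (X₂ + (ρ:ℂ) • 1)⁻¹))
          + ((ρ:ℂ))^2 • ((a:ℂ) • (X₁ + (ρ:ℂ) • 1)⁻¹ + (b:ℂ) • (X₂ + (ρ:ℂ) • 1)⁻¹
              - ((a:ℂ) • (X₁ + (ρ:ℂ) • 1) + (b:ℂ) • (X₂ + (ρ:ℂ) • 1))⁻¹) := by
      rw [hZaff]
      nth_rewrite 1 [show ((ρ:ℂ) • (1 : Matrix (Fin S) (Fin S) ℂ))
        = ((a:ℂ)+(b:ℂ)) • ((ρ:ℂ) • (1 : Matrix (Fin S) (Fin S) ℂ)) from by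
          rw [habC, one_smul]]
      module
    have hT1pd := T_posdef hX1 hρ
    have hT2pd := T_posdef hX2 hρ
    have hTcpd := T_posdef hXc hρ
    have hTabpd : ((a:ℂ) • ((ρ:ℂ) • 1 - ((ρ:ℂ))^2 • (X₁ + (ρ:ℂ) • 1)⁻¹)
        + (b:ℂ) • ((ρ:ℂ) • 1 - ((ρ:ℂ))^2 • (X₂ + (ρ:ℂ) • 1)⁻¹)).PosDef :=
      (pd_smul hT1pd hapos).add (pd_smul hT2pd hbpos)
    have hstep1 : ((a:ℂ) • ((ρ:ℂ) • 1 - ((ρ:ℂ))^2 • (X₁ + (ρ:ℂ) • 1)⁻¹)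
          + (b:ℂ) • ((ρ:ℂ) • 1 - ((ρ:ℂ))^2 • (X₂ + (ρ:ℂ) • 1)⁻¹)).det.re
        ≤ ((ρ:ℂ) • 1 - ((ρ:ℂ))^2 • (Xm (a • C₁ + b • C₂) + (ρ:ℂ) • 1)⁻¹).det.re := by
      rw [hTaff]
      refine det_re_mono hTabpd ?_
      have := psd_smul hPpsd (show (0:ℝ) ≤ ρ^2 from sq_nonneg ρ)
      convert this using 2
      push_cast
      ring
    have hstep2 := kyFan hT1pd hT2pd ha hb hab
    have ht1pos := pd_det_re_pos hT1pd
    have ht2pos := pd_det_re_pos hT2pd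
    have hlog : a * Real.log (((ρ:ℂ) • 1 - ((ρ:ℂ))^2 • (X₁ + (ρ:ℂ) • 1)⁻¹).det.re)
          + b * Real.log (((ρ:ℂ) • 1 - ((ρ:ℂ))^2 • (X₂ + (ρ:ℂ) • 1)⁻¹).det.re)
        ≤ Real.log (((ρ:ℂ) • 1 - ((ρ:ℂ))^2
            • (Xm (a • C₁ + b • C₂) + (ρ:ℂ) • 1)⁻¹).det.re) := by
      have h1 := le_trans hstep2 hstep1
      have hp : 0 < (((ρ:ℂ) • 1 - ((ρ:ℂ))^2 • (X₁ + (ρ:ℂ) • 1)⁻¹).det.re) ^ a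
          * (((ρ:ℂ) • 1 - ((ρ:ℂ))^2 • (X₂ + (ρ:ℂ) • 1)⁻¹).det.re) ^ b := by positivity
      have h2 := Real.log_le_log hp h1
      rwa [Real.log_mul (by positivity) (by positivity), Real.log_rpow ht1pos,
        Real.log_rpow ht2pos] at h2
    have hv1 := log_obj_eq hX1 hρ
    have hv2 := log_obj_eq hX2 hρ
    have hvc := log_obj_eq hXc hρ
    simp only [smul_eq_mul, Set.mem_setOf_eq] at *
    rw [hv1, hv2, hvc]
    have hk : a * Real.log ((Matrix.diagonal (fun s => (lam s : ℂ))
            + (ρ⁻¹ : ℂ) • (1 : Matrix (Fin S) (Fin S) ℂ)).det.re)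
        + b * Real.log ((Matrix.diagonal (fun s => (lam s : ℂ))
            + (ρ⁻¹ : ℂ) • (1 : Matrix (Fin S) (Fin S) ℂ)).det.re)
        = Real.log ((Matrix.diagonal (fun s => (lam s : ℂ))
            + (ρ⁻¹ : ℂ) • (1 : Matrix (Fin S) (Fin S) ℂ)).det.re) := by
      rw [← add_mul, hab, one_mul]
    linarith [hlog]
end

section
/- For fixed total power budget P > 0, the maximum of Σ_{s=1}^S log(1 + λ_s² ρ p_s / (λ_s(ρ + p_s) + 1)) over p_s ≥ 0 with Σ_s p_s ≤ P is attained by a water-filling allocation: there exists μ > 0 such that p_s = max(μ - 1/λ_s, 0) for all s, and Σ_s p_s = P. -/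
open Real

lemma wf_key (l ρ μ q : ℝ) (hl : 0 < l) (hρ : 0 < ρ) (hμ : 0 < μ) (hq : 0 ≤ q) :
    Real.log (1 + l ^ 2 * ρ * q / (l * (ρ + q) + 1)) ≤
    Real.log (1 + l ^ 2 * ρ * max (μ - l⁻¹) 0 / (l * (ρ + max (μ - l⁻¹) 0) + 1))
      + ρ / (μ * (μ + ρ)) * (q - max (μ - l⁻¹) 0) := by
  set p : ℝ := max (μ - l⁻¹) 0 with hpdef
  have hp : 0 ≤ p := le_max_right _ _
  have hDq : 0 < l * (ρ + q) + 1 := by positivity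
  have hDp : 0 < l * (ρ + p) + 1 := by positivity
  have hM : 0 < μ * (μ + ρ) := by positivity
  have hBrw : 1 + l ^ 2 * ρ * q / (l * (ρ + q) + 1)
      = (1 + l * q) * (1 + l * ρ) / (l * (ρ + q) + 1) := by
    field_simp; ring
  have hCrw : 1 + l ^ 2 * ρ * p / (l * (ρ + p) + 1)
      = (1 + l * p) * (1 + l * ρ) / (l * (ρ + p) + 1) := by
    field_simp; ring
  have hBpos : 0 < (1 + l * q) * (1 + l * ρ) / (l * (ρ + q) + 1) := by positivity
  have hCpos : 0 < (1 + l * p) * (1 + l * ρ) / (l * (ρ + p) + 1) := by positivity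
  rw [hBrw, hCrw]
  -- key rational inequality
  have hrat : (1 + l * q) * (1 + l * ρ) / (l * (ρ + q) + 1)
      / ((1 + l * p) * (1 + l * ρ) / (l * (ρ + p) + 1))
      ≤ 1 + ρ / (μ * (μ + ρ)) * (q - p) := by
    have hpoly : (1 + l * q) * (l * (ρ + p) + 1) * (μ * (μ + ρ))
        ≤ (μ * (μ + ρ) + ρ * (q - p)) * ((1 + l * p) * (l * (ρ + q) + 1)) := by
      rcases le_total (μ - l⁻¹) 0 with h0 | h0
      · have hpe : p = 0 := max_eq_right h0
        have hlμ : l * μ ≤ 1 := by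
          have := (sub_nonpos.mp h0)
          calc l * μ ≤ l * l⁻¹ := by nlinarith
            _ = 1 := mul_inv_cancel₀ hl.ne'
        rw [hpe]
        nlinarith [mul_nonneg (mul_nonneg (mul_nonneg hρ.le hq) (mul_nonneg hl.le hρ.le)) (sub_nonneg.mpr hlμ),
          mul_nonneg (mul_nonneg hρ.le hq) (mul_nonneg hl.le hq),
          mul_nonneg (mul_nonneg hρ.le hq) (mul_nonneg (sub_nonneg.mpr hlμ) (by positivity : (0:ℝ) ≤ 1 + l * μ))]
      · have hpe : p = μ - l⁻¹ := max_eq_left h0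
        have hlp : l * p = l * μ - 1 := by
          rw [hpe, mul_sub, mul_inv_cancel₀ hl.ne']
        have heq : (μ * (μ + ρ) + ρ * (q - p)) * ((1 + l * p) * (l * (ρ + q) + 1))
            - (1 + l * q) * (l * (ρ + p) + 1) * (μ * (μ + ρ))
            = ρ * l ^ 2 * μ * (q - p) ^ 2 := by
          linear_combination (ρ * (q - p) * (l * (ρ + q) + 1 + l * μ)) * hlp
        have hnn : 0 ≤ ρ * l ^ 2 * μ * (q - p) ^ 2 := by positivity
        linarith
    have hstep : (1 + l * q) * (1 + l * ρ) / (l * (ρ + q) + 1)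
        / ((1 + l * p) * (1 + l * ρ) / (l * (ρ + p) + 1))
        = (1 + l * q) * (l * (ρ + p) + 1) / ((1 + l * p) * (l * (ρ + q) + 1)) := by
      have h1 : (0:ℝ) < 1 + l * q := by positivity
      have h2 : (0:ℝ) < 1 + l * p := by positivity
      have h3 : (0:ℝ) < 1 + l * ρ := by positivity
      field_simp
    rw [hstep, div_le_iff₀ (by positivity)]
    have hν : 1 + ρ / (μ * (μ + ρ)) * (q - p)
        = (μ * (μ + ρ) + ρ * (q - p)) / (μ * (μ + ρ)) := by
      field_simp
    rw [hν, div_mul_eq_mul_div, le_div_iff₀ hM]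
    linarith [hpoly]
  have hABpos : 0 < (1 + l * q) * (1 + l * ρ) / (l * (ρ + q) + 1)
      / ((1 + l * p) * (1 + l * ρ) / (l * (ρ + p) + 1)) := div_pos hBpos hCpos
  have hlog := Real.log_le_sub_one_of_pos hABpos
  rw [Real.log_div hBpos.ne' hCpos.ne'] at hlog
  linarith

/-- Water-filling optimality: for a total power budget `P > 0`, the maximum of
`Σ_s log(1 + λ_s² ρ p_s / (λ_s(ρ + p_s) + 1))` over `p_s ≥ 0`, `Σ_s p_s ≤ P`
is attained at `p_s = max(μ - 1/λ_s, 0)` for some water level `μ > 0`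
with `Σ_s p_s = P`. -/
theorem waterfilling_optimal
    (S : ℕ) (lam : Fin S → ℝ) (hlam : ∀ s, 0 < lam s)
    (ρ P : ℝ) (hρ : 0 < ρ) (hP : 0 < P) (hS : 0 < S) :
    ∃ μ : ℝ, 0 < μ ∧
      (∑ s, max (μ - (lam s)⁻¹) 0) = P ∧
      ∀ q : Fin S → ℝ, (∀ s, 0 ≤ q s) → (∑ s, q s) ≤ P →
        (∑ s, Real.log (1 + (lam s) ^ 2 * ρ * q s / (lam s * (ρ + q s) + 1)))
          ≤ ∑ s, Real.log (1 + (lam s) ^ 2 * ρ * max (μ - (lam s)⁻¹) 0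
              / (lam s * (ρ + max (μ - (lam s)⁻¹) 0) + 1)) := by
  have hne : (Finset.univ : Finset (Fin S)).Nonempty := ⟨⟨0, hS⟩, Finset.mem_univ _⟩
  set m : ℝ := Finset.univ.inf' hne fun s => (lam s)⁻¹ with hm
  have hmpos : 0 < m := by
    rw [hm, Finset.lt_inf'_iff]
    exact fun s _ => inv_pos.mpr (hlam s)
  set W : ℝ → ℝ := fun μ => ∑ s, max (μ - (lam s)⁻¹) 0 with hWdef
  have hWcont : Continuous W := by
    apply continuous_finset_sum
    exact fun s _ => (continuous_id.sub continuous_const).max continuous_const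
  have hWm : W m = 0 := by
    apply Finset.sum_eq_zero
    intro s _
    have : m ≤ (lam s)⁻¹ := Finset.inf'_le _ (Finset.mem_univ s)
    exact max_eq_right (by linarith)
  have hWmP : P ≤ W (m + P) := by
    obtain ⟨s₀, _, hs₀⟩ := Finset.exists_mem_eq_inf' hne fun s => (lam s)⁻¹
    have hterm : max (m + P - (lam s₀)⁻¹) 0 = P := by
      rw [← hs₀]; simp only [← hm, add_sub_cancel_left]
      exact max_eq_left hP.le
    calc P = max (m + P - (lam s₀)⁻¹) 0 := hterm.symm
      _ ≤ ∑ s, max (m + P - (lam s)⁻¹) 0 :=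
        Finset.single_le_sum (f := fun s => max (m + P - (lam s)⁻¹) 0) (fun s _ => le_max_right _ _) (Finset.mem_univ s₀)
  have hPmem : P ∈ Set.Icc (W m) (W (m + P)) := ⟨by rw [hWm]; exact hP.le, hWmP⟩
  obtain ⟨μ, hμIcc, hWμ⟩ := intermediate_value_Icc (by linarith : m ≤ m + P)
      hWcont.continuousOn hPmem
  have hμpos : 0 < μ := lt_of_lt_of_le hmpos hμIcc.1
  refine ⟨μ, hμpos, hWμ, ?_⟩
  intro q hq hqsum
  set ν : ℝ := ρ / (μ * (μ + ρ)) with hν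
  have hνpos : 0 < ν := by positivity
  have hkey : ∀ s : Fin S,
      Real.log (1 + (lam s) ^ 2 * ρ * q s / (lam s * (ρ + q s) + 1))
        ≤ Real.log (1 + (lam s) ^ 2 * ρ * max (μ - (lam s)⁻¹) 0
            / (lam s * (ρ + max (μ - (lam s)⁻¹) 0) + 1))
          + ν * (q s - max (μ - (lam s)⁻¹) 0) :=
    fun s => wf_key (lam s) ρ μ (q s) (hlam s) hρ hμpos (hq s)
  calc (∑ s, Real.log (1 + (lam s) ^ 2 * ρ * q s / (lam s * (ρ + q s) + 1)))
      ≤ ∑ s, (Real.log (1 + (lam s) ^ 2 * ρ * max (μ - (lam s)⁻¹) 0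
            / (lam s * (ρ + max (μ - (lam s)⁻¹) 0) + 1))
          + ν * (q s - max (μ - (lam s)⁻¹) 0)) :=
        Finset.sum_le_sum fun s _ => hkey s
    _ = (∑ s, Real.log (1 + (lam s) ^ 2 * ρ * max (μ - (lam s)⁻¹) 0
            / (lam s * (ρ + max (μ - (lam s)⁻¹) 0) + 1)))
          + ν * ((∑ s, q s) - ∑ s, max (μ - (lam s)⁻¹) 0) := by
        rw [Finset.sum_add_distrib, ← Finset.mul_sum, Finset.sum_sub_distrib]
    _ ≤ ∑ s, Real.log (1 + (lam s) ^ 2 * ρ * max (μ - (lam s)⁻¹) 0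
            / (lam s * (ρ + max (μ - (lam s)⁻¹) 0) + 1)) := by
        have hWμ' : (∑ s, max (μ - (lam s)⁻¹) 0) = P := hWμ
        have h1 : (∑ s, q s) - (∑ s, max (μ - (lam s)⁻¹) 0) ≤ 0 := by
          rw [hWμ']; linarith
        nlinarith [mul_nonpos_of_nonneg_of_nonpos hνpos.le h1]
end

section
/- The optimal water-filling power allocation p_s = max(μ - 1/λ_s, 0) maximizing Σ_s log(1 + λ_s² ρ p_s/(λ_s(ρ + p_s) + 1)) subject to Σ_s p_s ≤ P does not depend on the uplink SNR ρ, i.e., the same allocation is optimal simultaneously for all ρ > 0. -/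
/-- rewrite the rate term. -/
lemma logform (l ρ x : ℝ) (hl : 0 < l) (hρ : 0 < ρ) (hx : 0 ≤ x) :
    Real.log (1 + l ^ 2 * ρ * x / (l * (ρ + x) + 1))
      = Real.log (1 + l * x) + Real.log (1 + l * ρ) - Real.log (1 + l * ρ + l * x) := by
  have hd : (0:ℝ) < l * (ρ + x) + 1 := by positivity
  have h1 : 1 + l ^ 2 * ρ * x / (l * (ρ + x) + 1)
      = (1 + l * x) * (1 + l * ρ) / (1 + l * ρ + l * x) := by
    field_simp
    ring
  rw [h1, Real.log_div (by positivity) (by positivity),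
    Real.log_mul (by positivity) (by positivity)]

/-- core concavity inequality. -/
lemma core (a b c : ℝ) (ha : 0 ≤ a) (hb : 0 ≤ b) (hc : 0 ≤ c) :
    (Real.log (1 + a) - Real.log (1 + c + a)) - (Real.log (1 + b) - Real.log (1 + c + b))
      ≤ c * (a - b) / ((1 + b) * (1 + c + b)) := by
  have h1 : (0:ℝ) < 1 + a := by linarith
  have h2 : (0:ℝ) < 1 + b := by linarith
  have h3 : (0:ℝ) < 1 + c + a := by linarith
  have h4 : (0:ℝ) < 1 + c + b := by linarith
  have hr : (0:ℝ) < (1 + a) * (1 + c + b) / ((1 + b) * (1 + c + a)) := by positivity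
  have hlog : Real.log ((1 + a) * (1 + c + b) / ((1 + b) * (1 + c + a)))
      = (Real.log (1 + a) - Real.log (1 + c + a))
        - (Real.log (1 + b) - Real.log (1 + c + b)) := by
    rw [Real.log_div (by positivity) (by positivity),
      Real.log_mul h1.ne' h4.ne', Real.log_mul h2.ne' h3.ne']
    ring
  have hle := Real.log_le_sub_one_of_pos hr
  rw [hlog] at hle
  have heq : (1 + a) * (1 + c + b) / ((1 + b) * (1 + c + a)) - 1
      = c * (a - b) / ((1 + b) * (1 + c + a)) := by
    field_simp
    ring
  rw [heq] at hle
  refine hle.trans ?_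
  rw [div_le_div_iff₀ (by positivity) (by positivity)]
  nlinarith [mul_nonneg (mul_nonneg hc h2.le) (sq_nonneg (a - b))]

/-- per-term KKT inequality for the water-filling point. -/
lemma perterm (l ρ μ q : ℝ) (hl : 0 < l) (hρ : 0 < ρ) (hμ : 0 < μ) (hq : 0 ≤ q) :
    Real.log (1 + l ^ 2 * ρ * q / (l * (ρ + q) + 1))
      - Real.log (1 + l ^ 2 * ρ * max (μ - l⁻¹) 0 / (l * (ρ + max (μ - l⁻¹) 0) + 1))
      ≤ ρ / (μ * (ρ + μ)) * (q - max (μ - l⁻¹) 0) := by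
  set p := max (μ - l⁻¹) 0 with hpdef
  have hp : 0 ≤ p := le_max_right _ _
  rw [logform l ρ q hl hρ hq, logform l ρ p hl hρ hp]
  have hcore := core (l * q) (l * p) (l * ρ)
    (by positivity) (by positivity) (by positivity)
  have hmain : (l * ρ) * (l * q - l * p) / ((1 + l * p) * (1 + l * ρ + l * p))
      ≤ ρ / (μ * (ρ + μ)) * (q - p) := by
    rcases le_total l⁻¹ μ with h | h
    · -- active: p = μ - l⁻¹
      have hpe : p = μ - l⁻¹ := max_eq_left (by linarith)
      rw [hpe]
      have h1 : 1 + l * (μ - l⁻¹) = l * μ := by field_simp; ring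
      have h2 : 1 + l * ρ + l * (μ - l⁻¹) = l * (ρ + μ) := by field_simp; ring
      rw [h1, h2]
      have heq : l * ρ * (l * q - l * (μ - l⁻¹)) / (l * μ * (l * (ρ + μ)))
          = ρ / (μ * (ρ + μ)) * (q - (μ - l⁻¹)) := by
        field_simp
      exact heq.le
    · -- inactive: p = 0
      have hpe : p = 0 := max_eq_right (by
        have : (0:ℝ) < l⁻¹ := by positivity
        linarith)
      rw [hpe]
      have hlμ : l * μ ≤ 1 := by
        have := mul_le_mul_of_nonneg_left h hl.le
        rwa [mul_inv_cancel₀ hl.ne'] at this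
      have hL : l * ρ * (l * q - l * 0) / ((1 + l * 0) * (1 + l * ρ + l * 0))
          = l * ρ * (l * q) / (1 + l * ρ) := by norm_num
      have hR : ρ / (μ * (ρ + μ)) * (q - 0) = ρ * q / (μ * (ρ + μ)) := by ring
      rw [hL, hR, div_le_div_iff₀ (by positivity) (by positivity)]
      nlinarith [mul_nonneg (mul_nonneg hρ.le hq)
        (mul_nonneg (sub_nonneg.2 hlμ) (by positivity : (0:ℝ) ≤ 1 + l * μ + l * ρ))]
  calc _ ≤ (l * ρ) * (l * q - l * p) / ((1 + l * p) * (1 + l * ρ + l * p)) := by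
        linarith [hcore]
      _ ≤ _ := hmain


/-- The water-filling allocation is independent of the uplink SNR: there is a
single water level `μ > 0` (with the budget met with equality) such that the
allocation `p_s = max(μ - 1/λ_s, 0)` is optimal simultaneously for every `ρ > 0`. -/
theorem waterfilling_independent_of_uplink_SNR
    (S : ℕ) (lam : Fin S → ℝ) (hlam : ∀ s, 0 < lam s)
    (P : ℝ) (hP : 0 < P) (hS : 0 < S) :
    ∃ μ : ℝ, 0 < μ ∧
      (∑ s, max (μ - (lam s)⁻¹) 0) = P ∧
      ∀ ρ : ℝ, 0 < ρ →
        ∀ q : Fin S → ℝ, (∀ s, 0 ≤ q s) → (∑ s, q s) ≤ P →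
          (∑ s, Real.log (1 + (lam s) ^ 2 * ρ * q s / (lam s * (ρ + q s) + 1)))
            ≤ ∑ s, Real.log (1 + (lam s) ^ 2 * ρ * max (μ - (lam s)⁻¹) 0
                / (lam s * (ρ + max (μ - (lam s)⁻¹) 0) + 1)) := by
    -- existence of the water level
  set g : ℝ → ℝ := fun μ => ∑ s, max (μ - (lam s)⁻¹) 0 with hg
  have hcont : Continuous g :=
    continuous_finset_sum _ fun s _ => (continuous_id.sub continuous_const).max continuous_const
  set s0 : Fin S := ⟨0, hS⟩
  set M : ℝ := (lam s0)⁻¹ + P with hM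
  have hM0 : (0:ℝ) ≤ M := by
    rw [hM]
    have := inv_pos.2 (hlam s0)
    linarith
  have hg0 : g 0 = 0 := Finset.sum_eq_zero fun s _ => max_eq_right (by
    have := inv_pos.2 (hlam s)
    linarith)
  have hgM : P ≤ g M := by
    have h1 : max (M - (lam s0)⁻¹) 0 = P := by
      rw [show M - (lam s0)⁻¹ = P by rw [hM]; ring]
      exact max_eq_left hP.le
    have h2 := Finset.single_le_sum (f := fun s : Fin S => max (M - (lam s)⁻¹) 0)
      (fun s _ => le_max_right _ _) (Finset.mem_univ s0)
    rw [h1] at h2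
    exact h2
  have hmem : P ∈ Set.Icc (g 0) (g M) := ⟨by rw [hg0]; exact hP.le, hgM⟩
  obtain ⟨μ, _, hgμ0⟩ := intermediate_value_Icc hM0 hcont.continuousOn hmem
  have hgμ : (∑ s, max (μ - (lam s)⁻¹) 0) = P := hgμ0
  have hμpos : 0 < μ := by
    by_contra hc
    push_neg at hc
    have : g μ = 0 := Finset.sum_eq_zero fun s _ => max_eq_right (by
      have := inv_pos.2 (hlam s)
      linarith)
    have : (∑ s, max (μ - (lam s)⁻¹) 0) = (0:ℝ) := this
    rw [hgμ] at this
    linarith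
  refine ⟨μ, hμpos, hgμ, ?_⟩
  intro ρ hρ q hq hqP
  have hν : 0 ≤ ρ / (μ * (ρ + μ)) := by positivity
  have key : ∀ s : Fin S,
      Real.log (1 + (lam s) ^ 2 * ρ * q s / (lam s * (ρ + q s) + 1))
        - Real.log (1 + (lam s) ^ 2 * ρ * max (μ - (lam s)⁻¹) 0
            / (lam s * (ρ + max (μ - (lam s)⁻¹) 0) + 1))
        ≤ ρ / (μ * (ρ + μ)) * (q s - max (μ - (lam s)⁻¹) 0) :=
    fun s => perterm (lam s) ρ μ (q s) (hlam s) hρ hμpos (hq s)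
  have hsum := Finset.sum_le_sum (fun s (_ : s ∈ Finset.univ) => key s)
  rw [Finset.sum_sub_distrib, ← Finset.mul_sum, Finset.sum_sub_distrib] at hsum
  have hbudget : (∑ s, q s) - (∑ s, max (μ - (lam s)⁻¹) 0) ≤ 0 := by
    rw [hgμ]
    linarith
  nlinarith [mul_nonneg hν (neg_nonneg.2 hbudget)]
end

section
/- Under the assumptions of the previous statement (pairwise-orthogonal subspaces Q_k and training matrix S_DL = Σ_k Q_k (P_k^{1/2} | 0)), the secret-key capacity of user k equals C_k = Σ_{s=1}^{S_k} log(1 + λ_{s,k}² ρ_{k,UL} ρ_{s,k,DL} / (λ_{s,k}(ρ_{k,UL} + ρ_{s,k,DL}) + 1)), where ρ_{s,k,DL} = p_{s,k}/σ_DL² and C_k is given by the log-det formula of equation (5) with C_DL = S_DL S_DL^†. -/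
open Matrix

lemma scalar_log (a r d : ℝ) (ha : 0 < a) (hr : 0 < r) (hd : 0 ≤ d) :
    Real.log (a + r⁻¹) - Real.log (r⁻¹ + (a⁻¹ + d)⁻¹)
      = Real.log (1 + a ^ 2 * r * d / (a * (r + d) + 1)) := by
  have had : 0 < a⁻¹ + d := by positivity
  have hf : 0 < a + r⁻¹ := by positivity
  have hg : 0 < r⁻¹ + (a⁻¹ + d)⁻¹ := by positivity
  have hden : 0 < a * (r + d) + 1 := by positivity
  rw [← Real.log_div hf.ne' hg.ne']
  congr 1
  field_simp
  ring

lemma diag_inv {n : Type*} [Fintype n] [DecidableEq n] (v : n → ℂ) (hv : ∀ i, v i ≠ 0) :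
    (Matrix.diagonal v)⁻¹ = Matrix.diagonal (fun i => (v i)⁻¹) := by
  apply Matrix.inv_eq_right_inv
  rw [Matrix.diagonal_mul_diagonal]
  have h : (fun i => v i * (v i)⁻¹) = fun _ => (1 : ℂ) :=
    funext fun i => mul_inv_cancel₀ (hv i)
  rw [h, Matrix.diagonal_one]

/-- Theorem 2 (capacity formula): under pairwise-orthogonal user subspaces and the
training matrix `S_DL = Σ_k Q_k (P_k^{1/2} | 0)`, the secret-key capacity of user
`k` given by the log-det formula (eq. (5)) with `C_DL = S_DL S_DLᴴ` equals
`Σ_s log(1 + λ_{s,k}² ρ_{k,UL} ρ_{s,k,DL} / (λ_{s,k}(ρ_{k,UL} + ρ_{s,k,DL}) + 1))`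
with `ρ_{s,k,DL} = p_{s,k}/σ_DL²`. -/
theorem multiuser_capacity_closed_form
    (M K : ℕ) (hK : 0 < K) (S : Fin K → ℕ) (T : ℕ)
    (hT : T = Finset.univ.sup S)
    (Q : ∀ k : Fin K, Matrix (Fin M) (Fin (S k)) ℂ)
    (hortho : ∀ k, (Q k)ᴴ * Q k = 1)
    (hcross : ∀ k k', k ≠ k' →
      (Q k)ᴴ * Q k' = (0 : Matrix (Fin (S k)) (Fin (S k')) ℂ))
    (lam : ∀ k : Fin K, Fin (S k) → ℝ) (hlam : ∀ k s, 0 < lam k s)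
    (ρUL : Fin K → ℝ) (hρUL : ∀ k, 0 < ρUL k)
    (σDL : ℝ) (hσ : 0 < σDL)
    (p : ∀ k : Fin K, Fin (S k) → ℝ) (hp : ∀ k s, 0 ≤ p k s)
    (B : ∀ k : Fin K, Matrix (Fin (S k)) (Fin T) ℂ)
    (hB : ∀ k (s : Fin (S k)) (t : Fin T),
      B k s t = if (t : ℕ) = (s : ℕ) then (Real.sqrt (p k s) : ℂ) else 0)
    (SDL : Matrix (Fin M) (Fin T) ℂ)
    (hSDL : SDL = ∑ k, Q k * B k) :
    ∀ k : Fin K,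
      Real.log ((Matrix.diagonal (fun s => (lam k s : ℂ))
          + ((ρUL k)⁻¹ : ℂ) • (1 : Matrix (Fin (S k)) (Fin (S k)) ℂ)).det.re)
        - Real.log ((((ρUL k)⁻¹ : ℂ) • (1 : Matrix (Fin (S k)) (Fin (S k)) ℂ)
            + ((Matrix.diagonal (fun s => (lam k s : ℂ)))⁻¹
              + ((σDL ^ 2)⁻¹ : ℂ) • ((Q k)ᴴ * (SDL * SDLᴴ) * Q k))⁻¹).det.re)
      = ∑ s, Real.log (1 + (lam k s) ^ 2 * ρUL k * (p k s / σDL ^ 2)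
          / (lam k s * (ρUL k + p k s / σDL ^ 2) + 1)) := by
  intro k
  have hST : S k ≤ T := hT ▸ Finset.le_sup (Finset.mem_univ k)
  -- Step 1 : (Q k)ᴴ * SDL = B k
  have hQS : (Q k)ᴴ * SDL = B k := by
    rw [hSDL, Matrix.mul_sum]
    rw [Finset.sum_eq_single k]
    · rw [← Matrix.mul_assoc, hortho, Matrix.one_mul]
    · intro j _ hj
      rw [← Matrix.mul_assoc, hcross k j (Ne.symm hj), Matrix.zero_mul]
    · exact fun h => absurd (Finset.mem_univ k) h
  -- Step 2 : Qᴴ (SDL SDLᴴ) Q = B Bᴴ = diagonal p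
  have hC : (Q k)ᴴ * (SDL * SDLᴴ) * Q k
      = Matrix.diagonal (fun s => (p k s : ℂ)) := by
    have h1 : SDLᴴ * Q k = (B k)ᴴ := by
      rw [← hQS, conjTranspose_mul, conjTranspose_conjTranspose]
    have h2 : (Q k)ᴴ * (SDL * SDLᴴ) * Q k = B k * (B k)ᴴ := by
      rw [← Matrix.mul_assoc ((Q k)ᴴ) SDL SDLᴴ, hQS, Matrix.mul_assoc, h1]
    rw [h2]
    ext s s'
    simp only [Matrix.mul_apply, conjTranspose_apply, hB, diagonal_apply]
    by_cases hss : s = s'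
    · subst hss
      rw [Finset.sum_eq_single (⟨(s : ℕ), lt_of_lt_of_le s.isLt hST⟩ : Fin T)]
      · simp [← Complex.ofReal_mul, Real.mul_self_sqrt (hp k s)]
      · intro t _ ht
        have : (t : ℕ) ≠ (s : ℕ) := by
          intro h; apply ht; exact Fin.ext h
        simp [this]
      · exact fun h => absurd (Finset.mem_univ _) h
    · have hv : (s : ℕ) ≠ (s' : ℕ) := fun h => hss (Fin.ext h)
      rw [if_neg hss]
      apply Finset.sum_eq_zero
      intro t _
      rcases eq_or_ne (t : ℕ) (s : ℕ) with h | h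
      · rw [if_pos h, if_neg (h ▸ hv), star_zero, mul_zero]
      · rw [if_neg h, zero_mul]
  rw [hC]
  -- positivity facts
  have hlam' := hlam k
  have hr := hρUL k
  have hσ2 : (0:ℝ) < σDL ^ 2 := by positivity
  -- Rewrite matrices as diagonals with real-cast entries
  have e1 : Matrix.diagonal (fun s => (lam k s : ℂ))
      + ((ρUL k)⁻¹ : ℂ) • (1 : Matrix (Fin (S k)) (Fin (S k)) ℂ)
      = Matrix.diagonal (fun s => ((lam k s + (ρUL k)⁻¹ : ℝ) : ℂ)) := by
    rw [smul_one_eq_diagonal, diagonal_add]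
    congr 1; funext s; push_cast; ring
  have hlamC : ∀ s : Fin (S k), ((lam k s : ℝ) : ℂ) ≠ 0 := fun s => by
    exact_mod_cast (hlam k s).ne'
  have i1 : (Matrix.diagonal (fun s => (lam k s : ℂ)))⁻¹
      + ((σDL ^ 2)⁻¹ : ℂ) • Matrix.diagonal (fun s => (p k s : ℂ))
      = Matrix.diagonal (fun s =>
          ((((lam k s)⁻¹ + (σDL ^ 2)⁻¹ * p k s : ℝ)) : ℂ)) := by
    rw [diag_inv _ hlamC, ← diagonal_smul, diagonal_add]
    refine congrArg Matrix.diagonal (funext fun s => ?_)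
    simp only [Pi.smul_apply, smul_eq_mul]
    push_cast
    ring
  have hgC : ∀ s : Fin (S k),
      ((((lam k s)⁻¹ + (σDL ^ 2)⁻¹ * p k s : ℝ)) : ℂ) ≠ 0 := fun s => by
    have h1 := hlam k s; have h2 := hp k s
    have h3 : 0 < (lam k s)⁻¹ + (σDL ^ 2)⁻¹ * p k s := by positivity
    exact_mod_cast h3.ne'
  have e2 : (((ρUL k)⁻¹ : ℂ) • (1 : Matrix (Fin (S k)) (Fin (S k)) ℂ)
        + ((Matrix.diagonal (fun s => (lam k s : ℂ)))⁻¹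
          + ((σDL ^ 2)⁻¹ : ℂ) • Matrix.diagonal (fun s => (p k s : ℂ)))⁻¹)
      = Matrix.diagonal (fun s =>
          (((ρUL k)⁻¹ + ((lam k s)⁻¹ + (σDL ^ 2)⁻¹ * p k s)⁻¹ : ℝ) : ℂ)) := by
    rw [i1, diag_inv _ hgC, smul_one_eq_diagonal, diagonal_add]
    refine congrArg Matrix.diagonal (funext fun s => ?_)
    push_cast
    ring
  rw [e1, e2, det_diagonal, det_diagonal]
  have cast1 : ∀ (f : Fin (S k) → ℝ), (∏ s, ((f s : ℝ) : ℂ)).re = ∏ s, f s := by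
    intro f
    rw [← Complex.ofReal_prod, Complex.ofReal_re]
  rw [cast1, cast1]
  have hposf : ∀ s : Fin (S k), 0 < lam k s + (ρUL k)⁻¹ := fun s => by
    have h1 := hlam k s; positivity
  have hposg : ∀ s : Fin (S k),
      0 < (ρUL k)⁻¹ + ((lam k s)⁻¹ + (σDL ^ 2)⁻¹ * p k s)⁻¹ := fun s => by
    have h1 := hlam k s; have h2 := hp k s
    have h3 : 0 < (lam k s)⁻¹ + (σDL ^ 2)⁻¹ * p k s := by positivity
    exact add_pos (inv_pos.2 hr) (inv_pos.2 h3)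
  rw [Real.log_prod (fun s _ => (hposf s).ne'),
     Real.log_prod (fun s _ => (hposg s).ne'), ← Finset.sum_sub_distrib]
  refine Finset.sum_congr rfl fun s _ => ?_
  have key := scalar_log (lam k s) (ρUL k) (p k s / σDL ^ 2) (hlam k s) hr
    (div_nonneg (hp k s) hσ2.le)
  rw [← key]
  congr 2
  · rw [inv_mul_eq_div]
end

section
/- For the constrained problem max Σ_{s∈T} log(1 + λ_s²ρ p_s/(λ_s(ρ+p_s)+1)) over subsets T ⊆ {1,...,S} with |T| ≤ T_max and powers p_s ≥ 0 (s ∈ T) with Σ p_s ≤ P, an optimal solution activates the T_max indices with largest λ_s (assuming the λ_s are distinct) and water-fills power over them. -/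
noncomputable def wfRate (ρ lam x : ℝ) : ℝ :=
  Real.log (1 + lam ^ 2 * ρ * x / (lam * (ρ + x) + 1))

lemma wfRate_zero (ρ lam : ℝ) : wfRate ρ lam 0 = 0 := by
  simp [wfRate]

lemma wfDen_pos {ρ lam x : ℝ} (hl : 0 < lam) (hρ : 0 < ρ) (hx : 0 ≤ x) :
    0 < lam * (ρ + x) + 1 := by nlinarith

lemma wfArg_pos {ρ lam x : ℝ} (hl : 0 < lam) (hρ : 0 < ρ) (hx : 0 ≤ x) :
    0 < 1 + lam ^ 2 * ρ * x / (lam * (ρ + x) + 1) := by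
  have hD := wfDen_pos hl hρ hx
  have : 0 ≤ lam ^ 2 * ρ * x / (lam * (ρ + x) + 1) := by positivity
  linarith

lemma wfRate_nonneg {ρ lam x : ℝ} (hl : 0 < lam) (hρ : 0 < ρ) (hx : 0 ≤ x) :
    0 ≤ wfRate ρ lam x := by
  have hD := wfDen_pos hl hρ hx
  have : 0 ≤ lam ^ 2 * ρ * x / (lam * (ρ + x) + 1) := by positivity
  exact Real.log_nonneg (by linarith)

lemma wfRate_mono {ρ lam lam' x : ℝ} (hl : 0 < lam) (hl' : lam ≤ lam')
    (hρ : 0 < ρ) (hx : 0 ≤ x) : wfRate ρ lam x ≤ wfRate ρ lam' x := by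
  have hl0' : 0 < lam' := lt_of_lt_of_le hl hl'
  have hD := wfDen_pos hl hρ hx
  have hD' := wfDen_pos hl0' hρ hx
  apply Real.log_le_log (wfArg_pos hl hρ hx)
  have h : lam ^ 2 * (lam' * (ρ + x) + 1) ≤ lam' ^ 2 * (lam * (ρ + x) + 1) := by
    have h1 : 0 ≤ lam * lam' * (ρ + x) * (lam' - lam) :=
      mul_nonneg (mul_nonneg (mul_nonneg hl.le hl0'.le) (by linarith)) (by linarith)
    nlinarith [h1]
  have h2 := mul_le_mul_of_nonneg_left h (mul_nonneg hρ.le hx)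
  have : lam ^ 2 * ρ * x / (lam * (ρ + x) + 1)
      ≤ lam' ^ 2 * ρ * x / (lam' * (ρ + x) + 1) := by
    rw [div_le_div_iff₀ hD hD']
    nlinarith [h2]
  linarith

/-- key per-mode concavity/KKT bound -/
lemma wfRate_key {ρ lam μ x : ℝ} (hl : 0 < lam) (hρ : 0 < ρ) (hμ : 0 < μ)
    (hx : 0 ≤ x) :
    wfRate ρ lam x ≤ wfRate ρ lam (max (μ - lam⁻¹) 0)
      + (ρ / (μ * (ρ + μ))) * (x - max (μ - lam⁻¹) 0) := by
  set p := max (μ - lam⁻¹) 0 with hp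
  have hp0 : 0 ≤ p := le_max_right _ _
  have hDx := wfDen_pos hl hρ hx
  have hDp := wfDen_pos hl hρ hp0
  have hAx := wfArg_pos hl hρ hx
  have hAp := wfArg_pos hl hρ hp0
  have hρμ : 0 < ρ + μ := by linarith
  have hlog : wfRate ρ lam x - wfRate ρ lam p
      ≤ (1 + lam ^ 2 * ρ * x / (lam * (ρ + x) + 1))
        / (1 + lam ^ 2 * ρ * p / (lam * (ρ + p) + 1)) - 1 := by
    rw [wfRate, wfRate, ← Real.log_div hAx.ne' hAp.ne']
    exact Real.log_le_sub_one_of_pos (div_pos hAx hAp)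
  rcases le_or_gt μ lam⁻¹ with hc | hc
  · -- p = 0
    have hpz : p = 0 := by rw [hp, max_eq_right]; linarith
    rw [hpz] at hlog ⊢
    simp only [mul_zero, add_zero, zero_div, div_one] at hlog
    have hml : lam * μ ≤ 1 := by
      calc lam * μ ≤ lam * lam⁻¹ := by nlinarith
      _ = 1 := mul_inv_cancel₀ hl.ne'
    have hfac : lam ^ 2 * μ * (ρ + μ) ≤ lam * (ρ + x) + 1 := by
      nlinarith [mul_nonneg hl.le hx, mul_nonneg (sub_nonneg.2 hml) (mul_nonneg hl.le hρ.le),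
        mul_nonneg (sub_nonneg.2 hml) (mul_nonneg hl.le hμ.le)]
    have key : lam ^ 2 * ρ * x / (lam * (ρ + x) + 1) ≤ ρ * x / (μ * (ρ + μ)) := by
      rw [div_le_div_iff₀ hDx (by positivity)]
      nlinarith [mul_le_mul_of_nonneg_left hfac (mul_nonneg hρ.le hx)]
    rw [wfRate_zero] at hlog ⊢
    have he : ρ / (μ * (ρ + μ)) * (x - 0) = ρ * x / (μ * (ρ + μ)) := by ring
    rw [he]
    linarith
  · -- p = μ - lam⁻¹
    have hpe : p = μ - lam⁻¹ := by
      rw [hp, max_eq_left]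
      have : 0 < μ - lam⁻¹ := by linarith
      linarith
    have hDpe : lam * (ρ + p) + 1 = lam * (ρ + μ) := by
      rw [hpe]; field_simp; ring
    have diff : (1 + lam ^ 2 * ρ * p / (lam * (ρ + p) + 1))
          * (1 + (ρ / (μ * (ρ + μ))) * (x - p))
        - (1 + lam ^ 2 * ρ * x / (lam * (ρ + x) + 1))
        = ρ * lam ^ 2 * (1 + lam * ρ) * (x - p) ^ 2
          / ((lam * (ρ + p) + 1) * (ρ + μ) * (lam * (ρ + x) + 1)) := by
      rw [hDpe, hpe]
      field_simp
      ring
    have h5 : 0 ≤ ρ * lam ^ 2 * (1 + lam * ρ) * (x - p) ^ 2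
        / ((lam * (ρ + p) + 1) * (ρ + μ) * (lam * (ρ + x) + 1)) := by
      apply div_nonneg (by positivity)
      exact (mul_pos (mul_pos hDp hρμ) hDx).le
    have h6 : (1 + lam ^ 2 * ρ * x / (lam * (ρ + x) + 1))
        / (1 + lam ^ 2 * ρ * p / (lam * (ρ + p) + 1)) - 1
        ≤ (ρ / (μ * (ρ + μ))) * (x - p) := by
      rw [div_sub_one hAp.ne', div_le_iff₀ hAp]
      nlinarith [diff, h5]
    linarith

/-- rate at the waterfilling point dominates the linear lower bound -/
lemma wfRate_kkt_lower {ρ lam μ : ℝ} (hl : 0 < lam) (hρ : 0 < ρ) (hμ : 0 < μ) :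
    (ρ / (μ * (ρ + μ))) * (max (μ - lam⁻¹) 0) ≤ wfRate ρ lam (max (μ - lam⁻¹) 0) := by
  set p := max (μ - lam⁻¹) 0 with hp
  have hp0 : 0 ≤ p := le_max_right _ _
  have hDp := wfDen_pos hl hρ hp0
  have hAp := wfArg_pos hl hρ hp0
  have hρμ : 0 < ρ + μ := by linarith
  rcases le_or_gt μ lam⁻¹ with hc | hc
  · have hpz : p = 0 := by rw [hp, max_eq_right]; linarith
    rw [hpz, wfRate_zero, mul_zero]
  · have hpe : p = μ - lam⁻¹ := by
      rw [hp, max_eq_left]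
      have : 0 < μ - lam⁻¹ := by linarith
      linarith
    have hml : 1 ≤ lam * μ := by
      calc (1:ℝ) = lam * lam⁻¹ := (mul_inv_cancel₀ hl.ne').symm
      _ ≤ lam * μ := by nlinarith
    have hlog : 1 - (1 + lam ^ 2 * ρ * p / (lam * (ρ + p) + 1))⁻¹
        ≤ wfRate ρ lam p := by
      have h := Real.log_le_sub_one_of_pos (inv_pos.mpr hAp)
      rw [Real.log_inv] at h
      rw [wfRate]; linarith
    have hDpe : lam * (ρ + p) + 1 = lam * (ρ + μ) := by
      rw [hpe]; field_simp; ring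
    have hApeq : 1 + lam ^ 2 * ρ * p / (lam * (ρ + p) + 1)
        = lam * μ * (1 + lam * ρ) / (lam * (ρ + p) + 1) := by
      rw [hDpe, hpe]
      field_simp
      ring
    have hnum : 0 < lam * μ * (1 + lam * ρ) := by positivity
    have diff2 : 1 - (1 + lam ^ 2 * ρ * p / (lam * (ρ + p) + 1))⁻¹
        - (ρ / (μ * (ρ + μ))) * p
        = ρ * p * (lam * μ - 1) / (μ * (1 + lam * ρ) * (ρ + μ)) := by
      rw [hApeq, inv_div, hDpe, hpe]
      field_simp
      ring
    have h7 : 0 ≤ ρ * p * (lam * μ - 1) / (μ * (1 + lam * ρ) * (ρ + μ)) := by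
      apply div_nonneg
      · exact mul_nonneg (mul_nonneg hρ.le hp0) (by linarith)
      · positivity
    linarith

lemma fin_strictMono_le {n S : ℕ} (f : Fin n → Fin S) (hf : StrictMono f) :
    ∀ v (hv : v < n), v ≤ (f ⟨v, hv⟩ : ℕ) := by
  intro v
  induction v with
  | zero => intro hv; exact Nat.zero_le _
  | succ m ih =>
    intro hv
    have hm : m < n := Nat.lt_of_succ_lt hv
    have h1 := ih hm
    have h2 : f ⟨m, hm⟩ < f ⟨m + 1, hv⟩ := hf (by simp [Fin.lt_def])
    have h3 := Fin.lt_def.mp h2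
    omega

/-- Corollary 1: with a pilot-budget constraint of at most `Tmax` active modes,
an optimal solution activates the `Tmax` strongest spatial modes (the `λ_s` being
in strictly decreasing order) and water-fills power over them: there is `μ > 0`
such that `p_s = max(μ - 1/λ_s, 0)` for `s < Tmax` and `p_s = 0` otherwise uses
the full budget and dominates every feasible allocation with at most `Tmax`
active modes. -/
theorem strongest_modes_waterfilling_under_pilot_constraint
    (S : ℕ) (lam : Fin S → ℝ) (hlam : ∀ s, 0 < lam s)
    (hdec : ∀ i j : Fin S, i < j → lam j < lam i)
    (ρ P : ℝ) (hρ : 0 < ρ) (hP : 0 < P)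
    (Tmax : ℕ) (hTmax : 0 < Tmax) (hTS : Tmax ≤ S) :
    ∃ μ : ℝ, 0 < μ ∧
      (∑ s : Fin S, (if (s : ℕ) < Tmax then max (μ - (lam s)⁻¹) 0 else 0)) = P ∧
      ∀ q : Fin S → ℝ, (∀ s, 0 ≤ q s) → (∑ s, q s) ≤ P →
        (Finset.univ.filter (fun s => q s ≠ 0)).card ≤ Tmax →
        (∑ s, Real.log (1 + (lam s) ^ 2 * ρ * q s / (lam s * (ρ + q s) + 1)))
          ≤ ∑ s, Real.log (1 + (lam s) ^ 2 * ρ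
              * (if (s : ℕ) < Tmax then max (μ - (lam s)⁻¹) 0 else 0)
              / (lam s * (ρ + (if (s : ℕ) < Tmax then max (μ - (lam s)⁻¹) 0 else 0)) + 1)) := by
  have hS0 : 0 < S := lt_of_lt_of_le hTmax hTS
  set i0 : Fin S := ⟨0, hS0⟩ with hi0
  set a := (lam i0)⁻¹ with haa
  have ha : 0 < a := inv_pos.2 (hlam i0)
  set h : ℝ → ℝ := fun μ =>
    ∑ s : Fin S, (if (s : ℕ) < Tmax then max (μ - (lam s)⁻¹) 0 else 0) with hh
  have hcont : Continuous h := by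
    apply continuous_finset_sum
    intro s _
    by_cases hs : (s : ℕ) < Tmax
    · simp only [hs, if_true]
      exact (continuous_id.sub continuous_const).max continuous_const
    · simp only [hs, if_false]; exact continuous_const
  have hlb : ∀ s, lam s ≤ lam i0 := by
    intro s
    rcases eq_or_lt_of_le (show i0 ≤ s from by simp [hi0, Fin.le_def]) with he | hlt
    · rw [← he]
    · exact (hdec i0 s hlt).le
  have hha : h a = 0 := by
    apply Finset.sum_eq_zero
    intro s _
    by_cases hs : (s : ℕ) < Tmax
    · simp only [hs, if_true]
      have : a ≤ (lam s)⁻¹ := by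
        rw [haa]
        exact inv_anti₀ (hlam s) (hlb s)
      rw [max_eq_right (by linarith)]
    · simp only [hs, if_false]
  have hhb : P ≤ h (a + P) := by
    have hterm : (if ((i0 : Fin S) : ℕ) < Tmax
        then max ((a + P) - (lam i0)⁻¹) 0 else 0) = P := by
      have : ((i0 : Fin S) : ℕ) = 0 := rfl
      rw [this, if_pos hTmax, ← haa]
      have : a + P - a = P := by ring
      rw [this, max_eq_left hP.le]
    have hsum := Finset.single_le_sum (f := fun s : Fin S =>
      (if (s : ℕ) < Tmax then max ((a + P) - (lam s)⁻¹) 0 else 0))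
      (fun s _ => by
        by_cases hs : (s : ℕ) < Tmax
        · simp only [hs, if_true]; exact le_max_right _ _
        · simp only [hs, if_false]; exact le_rfl) (Finset.mem_univ i0)
    rw [hterm] at hsum
    exact hsum
  obtain ⟨μ, hμmem, hμeq⟩ := intermediate_value_Icc (by linarith : a ≤ a + P)
    hcont.continuousOn (Set.mem_Icc.mpr ⟨by rw [hha]; exact hP.le, hhb⟩)
  have hμ : 0 < μ := lt_of_lt_of_le ha hμmem.1
  refine ⟨μ, hμ, hμeq, ?_⟩
  intro q hq0 hqP hcard
  -- notation
  set ν := ρ / (μ * (ρ + μ)) with hν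
  have hν0 : 0 < ν := by positivity
  set pf : Fin S → ℝ := fun t => max (μ - (lam t)⁻¹) 0 with hpf
  show (∑ s, wfRate ρ (lam s) (q s))
      ≤ ∑ s, wfRate ρ (lam s) (if (s : ℕ) < Tmax then pf s else 0)
  set A := Finset.univ.filter (fun s => q s ≠ 0) with hA
  set n := A.card with hn
  have hnT : n ≤ Tmax := hcard
  set e := A.orderEmbOfFin (rfl : A.card = n) with he
  have himg : Finset.image (fun k => (e k : Fin S)) Finset.univ = A := by
    apply Finset.eq_of_subset_of_card_le
    · intro t ht
      simp only [Finset.mem_image, Finset.mem_univ, true_and] at ht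
      obtain ⟨k, rfl⟩ := ht
      exact Finset.orderEmbOfFin_mem A rfl k
    · rw [Finset.card_image_of_injective _ e.injective, Finset.card_univ,
        Fintype.card_fin]
  have hinj : Function.Injective (fun k => (e k : Fin S)) := e.injective
  -- step 1 : restrict to support
  have step1 : (∑ s, wfRate ρ (lam s) (q s)) = ∑ a ∈ A, wfRate ρ (lam a) (q a) := by
    refine (Finset.sum_subset (Finset.subset_univ A) ?_).symm
    intro s _ hs
    simp only [hA, Finset.mem_filter, Finset.mem_univ, true_and, not_not] at hs
    rw [hs, wfRate_zero]
  have step2 : ∀ F : Fin S → ℝ, ∑ a ∈ A, F a = ∑ k : Fin n, F (e k) := by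
    intro F
    have h2 := Finset.sum_image (s := Finset.univ) (g := fun k => (e k : Fin S))
      (f := F) (fun x _ y _ hxy => hinj hxy)
    rw [himg] at h2
    exact h2
  -- ψ : compression map
  have hψlt : ∀ k : Fin n, (k : ℕ) < S := fun k =>
    lt_of_lt_of_le (lt_of_lt_of_le k.2 hnT) hTS
  set ψ : Fin n → Fin S := fun k => ⟨(k : ℕ), hψlt k⟩ with hψ
  have hψinj : Function.Injective ψ := by
    intro k l hkl
    have hv := congrArg Fin.val hkl
    exact Fin.ext hv
  have hrank : ∀ k : Fin n, ((ψ k : Fin S) : ℕ) ≤ ((e k : Fin S) : ℕ) := by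
    intro k
    have := fin_strictMono_le (fun k => (e k : Fin S)) e.strictMono k k.2
    exact this
  have hψlam : ∀ k : Fin n, lam (e k) ≤ lam (ψ k) := by
    intro k
    rcases eq_or_lt_of_le (show ψ k ≤ e k from Fin.le_def.mpr (hrank k)) with heq | hlt
    · rw [heq]
    · exact (hdec _ _ hlt).le
  -- per-term bound
  have perterm : ∀ k : Fin n,
      wfRate ρ (lam (e k)) (q (e k))
        ≤ (wfRate ρ (lam (ψ k)) (pf (ψ k)) - ν * pf (ψ k)) + ν * q (e k) := by
    intro k
    have h1 : wfRate ρ (lam (e k)) (q (e k)) ≤ wfRate ρ (lam (ψ k)) (q (e k)) :=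
      wfRate_mono (hlam _) (hψlam k) hρ (hq0 _)
    have h2 := wfRate_key (lam := lam (ψ k)) (hlam _) hρ hμ (hq0 (e k))
    calc wfRate ρ (lam (e k)) (q (e k)) ≤ wfRate ρ (lam (ψ k)) (q (e k)) := h1
    _ ≤ wfRate ρ (lam (ψ k)) (pf (ψ k)) + ν * (q (e k) - pf (ψ k)) := h2
    _ = (wfRate ρ (lam (ψ k)) (pf (ψ k)) - ν * pf (ψ k)) + ν * q (e k) := by ring
  -- G function
  set G : Fin S → ℝ := fun t => wfRate ρ (lam t) (pf t) - ν * pf t with hG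
  have hGnn : ∀ t, 0 ≤ G t := by
    intro t
    have hk := wfRate_kkt_lower (lam := lam t) (hlam t) hρ hμ
    simp only [hG, hν, hpf]
    linarith [hk]
  set TT := Finset.univ.filter (fun t : Fin S => (t : ℕ) < Tmax) with hTT
  have stepG : ∑ k : Fin n, G (ψ k) ≤ ∑ t ∈ TT, G t := by
    rw [show ∑ k : Fin n, G (ψ k) = ∑ t ∈ Finset.image ψ Finset.univ, G t from
      (Finset.sum_image (fun x _ y _ hxy => hψinj hxy)).symm]
    apply Finset.sum_le_sum_of_subset_of_nonneg
    · intro t ht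
      simp only [Finset.mem_image, Finset.mem_univ, true_and] at ht
      obtain ⟨k, rfl⟩ := ht
      simp only [hTT, Finset.mem_filter, Finset.mem_univ, true_and]
      exact lt_of_lt_of_le k.2 hnT
    · intro t _ _; exact hGnn t
  have stepq : ∑ k : Fin n, q (e k) ≤ P := by
    rw [← step2]
    calc (∑ a ∈ A, q a) ≤ ∑ s, q s := by
          exact Finset.sum_le_sum_of_subset_of_nonneg (Finset.subset_univ A)
            (fun s _ _ => hq0 s)
    _ ≤ P := hqP
  have steppf : ∑ t ∈ TT, pf t = P := by
    rw [hTT, Finset.sum_filter]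
    exact hμeq
  have stepRHS : ∑ s, wfRate ρ (lam s) (if (s : ℕ) < Tmax then pf s else 0)
      = ∑ t ∈ TT, wfRate ρ (lam t) (pf t) := by
    rw [hTT, Finset.sum_filter]
    apply Finset.sum_congr rfl
    intro s _
    by_cases hs : (s : ℕ) < Tmax
    · simp only [hs, if_true]
    · simp only [hs, if_false, wfRate_zero]
  calc (∑ s, wfRate ρ (lam s) (q s))
      = ∑ k : Fin n, wfRate ρ (lam (e k)) (q (e k)) := by
        rw [step1]; exact step2 _
  _ ≤ ∑ k : Fin n, ((wfRate ρ (lam (ψ k)) (pf (ψ k)) - ν * pf (ψ k)) + ν * q (e k)) :=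
        Finset.sum_le_sum (fun k _ => perterm k)
  _ = (∑ k : Fin n, G (ψ k)) + ν * ∑ k : Fin n, q (e k) := by
        rw [Finset.sum_add_distrib, Finset.mul_sum]
  _ ≤ (∑ t ∈ TT, G t) + ν * P := by
        have := mul_le_mul_of_nonneg_left stepq hν0.le
        linarith [stepG]
  _ = (∑ t ∈ TT, wfRate ρ (lam t) (pf t)) - ν * (∑ t ∈ TT, pf t) + ν * P := by
        simp only [hG, Finset.sum_sub_distrib, Finset.mul_sum]
  _ = ∑ t ∈ TT, wfRate ρ (lam t) (pf t) := by rw [steppf]; ring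
  _ = ∑ s, wfRate ρ (lam s) (if (s : ℕ) < Tmax then pf s else 0) := stepRHS.symm
end
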